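/- arXiv:1403.3950 — 5 statements merged into one kernel-verified Lean document; each statement's English description precedes it below -/
import Mathlib

section
/- Suppose 𝒳 is an open subset of ℝ^d which contains a bounded rectangle J which contains K_{2D} ∖ K_D, where K_{2D} ∖ K_D has positive Lebesgue measure, and suppose there are δ > 0 and ε > 0 such that P(x, dy) ≥ ε Leb(dy) whenever x, y ∈ J with |y − x| < δ, where Leb is Lebesgue measure on ℝ^d. Then assumption (A3) holds with ν* = Uniform(K_{2D} ∖ K_D): there are ε' > 0 and n₀ ∈ ℕ such that P^{n₀}(x, A) ≥ ε' ν*(A) for all x ∈ K_{2D} ∖ K_D and all Borel sets A. -/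
open MeasureTheory ProbabilityTheory Filter Metric Set
open scoped ENNReal Topology

noncomputable def iterK {X : Type*} [MeasurableSpace X] (P : Kernel X X) : ℕ → Kernel X X
  | 0 => Kernel.deterministic id measurable_id
  | n + 1 => P.comp (iterK P n)

noncomputable def tvDist {X : Type*} [MeasurableSpace X] (μ ν : Measure X) : ℝ≥0∞ :=
  ⨆ A : {s : Set X // MeasurableSet s}, (μ A.1 - ν A.1) ⊔ (ν A.1 - μ A.1)

def HarrisErgodic {X : Type*} [MeasurableSpace X] (P : Kernel X X) (π : Measure X) : Prop :=
  (∀ A : Set X, MeasurableSet A → ∫⁻ x, P x A ∂π = π A) ∧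
    ∀ x, Tendsto (fun n => tvDist (iterK P n x) π) atTop (𝓝 0)

def IsAdversarial {X Ω : Type*} [MeasurableSpace X] [MetricSpace X] [MeasurableSpace Ω]
    (P : Kernel X X) (K : Set X) (D : ℝ) (x₀ : X) (μ : Measure Ω) (Xp : ℕ → Ω → X) : Prop :=
  (∀ n, Measurable (Xp n)) ∧ (∀ ω, Xp 0 ω = x₀) ∧
  (∀ (n : ℕ) (A : Set X), MeasurableSet A → ∀ E : Set Ω,
      MeasurableSet[MeasurableSpace.comap (fun ω (i : Fin (n + 1)) => Xp i ω) inferInstance] E →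
      μ (E ∩ {ω | Xp n ω ∉ K} ∩ {ω | Xp (n + 1) ω ∈ A}) =
        ∫⁻ ω in E ∩ {ω | Xp n ω ∉ K}, P (Xp n ω) A ∂μ) ∧
  (∀ n : ℕ, μ ({ω | Xp n ω ∈ K} ∩ {ω | Xp (n + 1) ω ∉ cthickening D K}) = 0)

def BoundedInProb {X Ω : Type*} [MeasurableSpace Ω] [MetricSpace X]
    (μ : Measure Ω) (Xp : ℕ → Ω → X) (o : X) : Prop :=
  Tendsto (fun L : ℝ => ⨆ n, μ {ω | L < dist (Xp n ω) o}) atTop (𝓝 0)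

def IsMarkovReal {X Ω : Type*} [MeasurableSpace X] [MeasurableSpace Ω]
    (P : Kernel X X) (ν : Measure X) (μ : Measure Ω) (Y : ℕ → Ω → X) : Prop :=
  (∀ n, Measurable (Y n)) ∧ μ.map (Y 0) = ν ∧
  (∀ (n : ℕ) (A : Set X), MeasurableSet A → ∀ E : Set Ω,
      MeasurableSet[MeasurableSpace.comap (fun ω (i : Fin (n + 1)) => Y i ω) inferInstance] E →
      μ (E ∩ {ω | Y (n + 1) ω ∈ A}) = ∫⁻ ω in E, P (Y n ω) A ∂μ)

noncomputable def hitTime {X Ω : Type*} (Y : ℕ → Ω → X) (B : Set X) (ω : Ω) : ℝ≥0∞ :=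
  ⨅ (n : ℕ) (_ : 1 ≤ n ∧ Y n ω ∈ B), (n : ℝ≥0∞)

noncomputable def survMeas {X : Type*} [MeasurableSpace X] (P : Kernel X X) (B : Set X)
    (ν : Measure X) : ℕ → Measure X
  | 0 => ν
  | n + 1 => (((survMeas P B ν n).bind (fun x => P x)).restrict Bᶜ)

noncomputable def expKappaHit {X : Type*} [MeasurableSpace X] (P : Kernel X X) (C : Set X)
    (κ : ℝ≥0∞) (x : X) : ℝ≥0∞ :=
  (∑' n : ℕ, κ ^ (n + 1) * ((survMeas P C (Measure.dirac x) n).bind (fun z => P z)) C)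
    + ⊤ * (1 - ∑' n : ℕ, ((survMeas P C (Measure.dirac x) n).bind (fun z => P z)) C)

def IsSmallSet {X : Type*} [MeasurableSpace X] (P : Kernel X X) (C : Set X) : Prop :=
  ∃ ν : Measure X, IsProbabilityMeasure ν ∧ ∃ ε : ℝ≥0∞, 0 < ε ∧ ∃ n₀ : ℕ, 1 ≤ n₀ ∧
    ∀ x ∈ C, ∀ A : Set X, MeasurableSet A → ε * ν A ≤ iterK P n₀ x A

def GeomErgodic {X : Type*} [MeasurableSpace X] (P : Kernel X X) (π : Measure X) : Prop :=
  ∃ ρ : ℝ≥0∞, ρ < 1 ∧ ∃ ξ : X → ℝ≥0∞, Measurable ξ ∧ (∀ x, 1 ≤ ξ x) ∧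
    (∀ᵐ x ∂π, ξ x < ⊤) ∧ ∀ (n : ℕ) (x : X), tvDist (iterK P n x) π ≤ ξ x * ρ ^ n


lemma vol_box {d : ℕ} (c e : Fin d → ℝ) :
    volume {x : EuclideanSpace ℝ (Fin d) | ∀ i, x i ∈ Ioo (c i) (e i)} =
      ∏ i, ENNReal.ofReal (e i - c i) := by
  have hmp := PiLp.volume_preserving_ofLp (Fin d)
  have hs : MeasurableSet (Set.univ.pi fun i => Ioo (c i) (e i)) :=
    MeasurableSet.univ_pi fun i => measurableSet_Ioo
  have h := hmp.measure_preimage hs.nullMeasurableSet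
  have hpre : ((@WithLp.ofLp 2 (Fin d → ℝ)) ⁻¹' (Set.univ.pi fun i => Ioo (c i) (e i)))
      = {x : EuclideanSpace ℝ (Fin d) | ∀ i, x i ∈ Ioo (c i) (e i)} := by
    ext x
    simp [Set.mem_pi]
  rw [hpre] at h
  rw [h, volume_pi_pi]
  simp [Real.volume_Ioo]

lemma vol_inter_ball_ge {d : ℕ} (a b : Fin d → ℝ) (ρ : ℝ) (hρ : 0 < ρ)
    (y : EuclideanSpace ℝ (Fin d)) (hy : ∀ i, y i ∈ Ioo (a i) (b i)) :
    ∏ i, ENNReal.ofReal (min (ρ / (Real.sqrt d + 1)) ((b i - a i) / 2)) ≤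
      volume ({x : EuclideanSpace ℝ (Fin d) | ∀ i, x i ∈ Ioo (a i) (b i)} ∩ ball y ρ) := by
  have hsd : (0:ℝ) ≤ Real.sqrt d := Real.sqrt_nonneg _
  set ρ' : ℝ := ρ / (Real.sqrt d + 1) with hρ'def
  have hρ'pos : 0 < ρ' := div_pos hρ (by linarith)
  set c : Fin d → ℝ := fun i => max (a i) (y i - ρ') with hc
  set e : Fin d → ℝ := fun i => min (b i) (y i + ρ') with he
  have hsub : {x : EuclideanSpace ℝ (Fin d) | ∀ i, x i ∈ Ioo (c i) (e i)} ⊆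
      {x : EuclideanSpace ℝ (Fin d) | ∀ i, x i ∈ Ioo (a i) (b i)} ∩ ball y ρ := by
    intro x hx
    constructor
    · intro i
      have h1 := (hx i).1
      have h2 := (hx i).2
      simp only [hc, he, lt_min_iff, max_lt_iff] at h1 h2
      exact ⟨lt_of_le_of_lt (le_max_left _ _) (hx i).1, lt_of_lt_of_le (hx i).2 (min_le_left _ _)⟩
    · -- dist x y < ρ
      have hcoord : ∀ i, dist (x i) (y i) ≤ ρ' := by
        intro i
        have h1 := (hx i).1
        have h2 := (hx i).2
        have h1' : y i - ρ' < x i := lt_of_le_of_lt (le_max_right _ _) h1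
        have h2' : x i < y i + ρ' := lt_of_lt_of_le h2 (min_le_right _ _)
        rw [Real.dist_eq, abs_le]
        constructor <;> linarith
      have hd : dist x y ≤ Real.sqrt d * ρ' := by
        rw [EuclideanSpace.dist_eq]
        have hsum : (∑ i, dist (x i) (y i) ^ 2) ≤ ∑ _i : Fin d, ρ' ^ 2 := by
          apply Finset.sum_le_sum
          intro i _
          exact pow_le_pow_left₀ dist_nonneg (hcoord i) 2
        calc Real.sqrt (∑ i, dist (x i) (y i) ^ 2) ≤ Real.sqrt (∑ _i : Fin d, ρ' ^ 2) :=
              Real.sqrt_le_sqrt hsum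
          _ = Real.sqrt (d * ρ' ^ 2) := by
              rw [Finset.sum_const, Finset.card_univ, Fintype.card_fin, nsmul_eq_mul]
          _ = Real.sqrt d * ρ' := by
              rw [Real.sqrt_mul (by positivity), Real.sqrt_sq hρ'pos.le]
      have : Real.sqrt d * ρ' < ρ := by
        have hcancel : ρ' * (Real.sqrt d + 1) = ρ := by
          rw [hρ'def, div_mul_cancel₀ _ (by positivity)]
        nlinarith
      exact mem_ball.2 (lt_of_le_of_lt hd this)
  calc ∏ i, ENNReal.ofReal (min ρ' ((b i - a i) / 2))
      ≤ ∏ i, ENNReal.ofReal (e i - c i) := by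
        apply Finset.prod_le_prod' 
        intro i _
        apply ENNReal.ofReal_le_ofReal
        have hai := (hy i).1
        have hbi := (hy i).2
        have hm1 : min ρ' ((b i - a i) / 2) ≤ ρ' := min_le_left _ _
        have hm2 : min ρ' ((b i - a i) / 2) ≤ (b i - a i) / 2 := min_le_right _ _
        rcases le_total (y i) ((a i + b i) / 2) with h | h
        · have h1 : c i ≤ y i := max_le hai.le (by linarith)
          have h2 : y i + min ρ' ((b i - a i) / 2) ≤ e i :=
            le_min (by linarith) (by linarith)
          linarith
        · have h1 : c i ≤ y i - min ρ' ((b i - a i) / 2) :=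
            max_le (by linarith) (by linarith)
          have h2 : y i ≤ e i := le_min hbi.le (by linarith)
          linarith
    _ = volume {x : EuclideanSpace ℝ (Fin d) | ∀ i, x i ∈ Ioo (c i) (e i)} := (vol_box c e).symm
    _ ≤ volume _ := measure_mono hsub

lemma box_meas {d : ℕ} (c e : Fin d → ℝ) :
    MeasurableSet {x : EuclideanSpace ℝ (Fin d) | ∀ i, x i ∈ Ioo (c i) (e i)} := by
  have : {x : EuclideanSpace ℝ (Fin d) | ∀ i, x i ∈ Ioo (c i) (e i)}
      = ⋂ i, (fun x : EuclideanSpace ℝ (Fin d) => x i) ⁻¹' Ioo (c i) (e i) := by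
    ext x; simp
  rw [this]
  exact MeasurableSet.iInter fun i => ((measurable_pi_apply i).comp (WithLp.measurable_ofLp 2 (Fin d → ℝ))) measurableSet_Ioo

lemma chain_vol {d : ℕ} (a b : Fin d → ℝ) (δ r : ℝ) (hδ : 0 < δ) (hr : δ ≤ r)
    (x z : EuclideanSpace ℝ (Fin d))
    (hx : ∀ i, x i ∈ Ioo (a i) (b i)) (hz : ∀ i, z i ∈ Ioo (a i) (b i))
    (hdist : dist x z < r + δ / 2) :
    ∏ i, ENNReal.ofReal (min (δ / 8 / (Real.sqrt d + 1)) ((b i - a i) / 2)) ≤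
      volume ({w : EuclideanSpace ℝ (Fin d) | ∀ i, w i ∈ Ioo (a i) (b i)} ∩ (ball x r ∩ ball z δ)) := by
  -- find y ∈ J with ball y (δ/8) ⊆ ball x r ∩ ball z δ
  obtain ⟨y, hyJ, hy1, hy2⟩ : ∃ y : EuclideanSpace ℝ (Fin d),
      (∀ i, y i ∈ Ioo (a i) (b i)) ∧ dist y x ≤ r - 3 * δ / 8 ∧ dist y z ≤ 7 * δ / 8 := by
    rcases le_total (dist x z) (7 * δ / 8) with hc | hc
    · exact ⟨x, hx, by rw [dist_self]; linarith, by rw [dist_comm] at hc ⊢; exact hc⟩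
    · have hdpos : 0 < dist x z := by linarith
      set θ : ℝ := (dist x z - 7 * δ / 8) / dist x z with hθdef
      have hθ0 : 0 ≤ θ := div_nonneg (by linarith) hdpos.le
      have hθ1 : θ ≤ 1 := by
        rw [div_le_one hdpos]; linarith
      set y : EuclideanSpace ℝ (Fin d) := x + θ • (z - x) with hydef
      have hyx : dist y x = dist x z - 7 * δ / 8 := by
        rw [dist_eq_norm]
        have : y - x = θ • (z - x) := by rw [hydef]; abel
        rw [this, norm_smul, Real.norm_eq_abs, abs_of_nonneg hθ0]
        rw [show ‖z - x‖ = dist x z by rw [← dist_eq_norm, dist_comm]]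
        rw [hθdef]
        field_simp
      have hyz : dist y z = 7 * δ / 8 := by
        rw [dist_eq_norm]
        have : y - z = (1 - θ) • (x - z) := by
          rw [hydef, sub_smul, one_smul, smul_sub, smul_sub]; abel
        rw [this, norm_smul, Real.norm_eq_abs, abs_of_nonneg (by linarith)]
        rw [show ‖x - z‖ = dist x z by rw [← dist_eq_norm]]
        rw [hθdef]
        field_simp
        ring
      refine ⟨y, ?_, by rw [hyx]; linarith, by rw [hyz]⟩
      intro i
      have hyi : y i = x i + θ * (z i - x i) := by
        rw [hydef]
        simp [PiLp.add_apply, PiLp.smul_apply, PiLp.sub_apply, smul_eq_mul]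
      rw [hyi]
      have h1 := (hx i).1; have h2 := (hx i).2
      have h3 := (hz i).1; have h4 := (hz i).2
      have hsum : θ * (z i - x i) + (1 - θ) * (z i - x i) = z i - x i := by ring
      rcases le_total (x i) (z i) with hxz | hxz
      · have e1 : 0 ≤ θ * (z i - x i) := mul_nonneg hθ0 (by linarith)
        have e2 : 0 ≤ (1 - θ) * (z i - x i) := mul_nonneg (by linarith) (by linarith)
        exact ⟨by linarith, by linarith⟩
      · have e1 : θ * (z i - x i) ≤ 0 := mul_nonpos_of_nonneg_of_nonpos hθ0 (by linarith)
        have e2 : (1 - θ) * (z i - x i) ≤ 0 := mul_nonpos_of_nonneg_of_nonpos (by linarith) (by linarith)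
        exact ⟨by linarith, by linarith⟩
  have hsub : ball y (δ / 8) ⊆ ball x r ∩ ball z δ := by
    intro w hw
    rw [mem_ball] at hw
    constructor
    · rw [mem_ball]
      calc dist w x ≤ dist w y + dist y x := dist_triangle _ _ _
        _ < δ / 8 + (r - 3 * δ / 8) := by linarith
        _ ≤ r := by linarith
    · rw [mem_ball]
      calc dist w z ≤ dist w y + dist y z := dist_triangle _ _ _
        _ < δ / 8 + 7 * δ / 8 := by linarith
        _ = δ := by ring
  calc ∏ i, ENNReal.ofReal (min (δ / 8 / (Real.sqrt d + 1)) ((b i - a i) / 2))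
      ≤ volume ({w : EuclideanSpace ℝ (Fin d) | ∀ i, w i ∈ Ioo (a i) (b i)} ∩ ball y (δ / 8)) :=
        vol_inter_ball_ge a b (δ / 8) (by linarith) y hyJ
    _ ≤ _ := measure_mono (inter_subset_inter_right _ hsub)

lemma key_minor {d : ℕ} (P : Kernel (EuclideanSpace ℝ (Fin d)) (EuclideanSpace ℝ (Fin d)))
    (a b : Fin d → ℝ) (δ ε : ℝ) (hδ : 0 < δ)
    (hmin : ∀ x ∈ {x : EuclideanSpace ℝ (Fin d) | ∀ i, x i ∈ Ioo (a i) (b i)},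
      ∀ A : Set (EuclideanSpace ℝ (Fin d)), MeasurableSet A →
        A ⊆ {x : EuclideanSpace ℝ (Fin d) | ∀ i, x i ∈ Ioo (a i) (b i)} ∩ ball x δ →
        ENNReal.ofReal ε * volume A ≤ P x A) :
    ∀ n : ℕ, ∀ x ∈ {x : EuclideanSpace ℝ (Fin d) | ∀ i, x i ∈ Ioo (a i) (b i)},
      ∀ A : Set (EuclideanSpace ℝ (Fin d)), MeasurableSet A →
        ENNReal.ofReal ε *
            (ENNReal.ofReal ε * ∏ i, ENNReal.ofReal (min (δ / 8 / (Real.sqrt d + 1)) ((b i - a i) / 2))) ^ n *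
            volume (A ∩ {x : EuclideanSpace ℝ (Fin d) | ∀ i, x i ∈ Ioo (a i) (b i)} ∩
              ball x (δ + n * (δ / 2))) ≤
          iterK P (n + 1) x A := by
  set E := EuclideanSpace ℝ (Fin d)
  set Js : Set E := {x : E | ∀ i, x i ∈ Ioo (a i) (b i)} with hJs
  have hJmeas : MeasurableSet Js := box_meas a b
  set ε₀ : ℝ≥0∞ := ENNReal.ofReal ε with hε₀
  set M : ℝ≥0∞ := ∏ i, ENNReal.ofReal (min (δ / 8 / (Real.sqrt d + 1)) ((b i - a i) / 2)) with hM
  intro n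
  induction n with
  | zero =>
    intro x hx A hA
    have hone : iterK P 1 x A = P x A := by
      simp only [iterK]
      rw [Kernel.comp_apply' _ _ _ hA, Kernel.deterministic_apply]
      rw [lintegral_dirac' _ (P.measurable_coe hA)]
      simp
    rw [hone]
    simp only [pow_zero, mul_one, Nat.cast_zero, zero_mul, add_zero]
    have hmeas : MeasurableSet (A ∩ Js ∩ ball x δ) :=
      (hA.inter hJmeas).inter measurableSet_ball
    have hsub : A ∩ Js ∩ ball x δ ⊆ Js ∩ ball x δ := fun w hw => ⟨hw.1.2, hw.2⟩
    calc ε₀ * volume (A ∩ Js ∩ ball x δ) ≤ P x (A ∩ Js ∩ ball x δ) :=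
          hmin x hx _ hmeas hsub
      _ ≤ P x A := measure_mono fun w hw => hw.1.1
  | succ n IH =>
    intro x hx A hA
    set R : ℝ := δ + n * (δ / 2) with hR
    set R' : ℝ := δ + (n + 1 : ℕ) * (δ / 2) with hR'
    have hRR' : R' = R + δ / 2 := by rw [hR, hR']; push_cast; ring
    have hδR : δ ≤ R := by
      have h0 : (0:ℝ) ≤ (n:ℝ) * (δ / 2) := by positivity
      rw [hR]; linarith
    set T : Set E := Js ∩ ball x R with hT
    have hTmeas : MeasurableSet T := hJmeas.inter measurableSet_ball
    set C : ℝ≥0∞ := ε₀ * (ε₀ * M) ^ n with hC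
    set μ : Measure E := iterK P (n + 1) x with hμ
    have hμge : C • volume.restrict T ≤ μ := by
      rw [Measure.le_iff]
      intro B hB
      rw [Measure.smul_apply, Measure.restrict_apply hB, smul_eq_mul]
      have := IH x hx B hB
      rw [hT, ← inter_assoc]
      exact this
    -- Fubini step
    set W : Set (E × E) := (univ ×ˢ (A ∩ Js)) ∩ {p : E × E | dist p.1 p.2 < δ} with hW
    have hWmeas : MeasurableSet W := by
      apply (MeasurableSet.univ.prod (hA.inter hJmeas)).inter
      exact (isOpen_lt (continuous_fst.dist continuous_snd) continuous_const).measurableSet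
    have hfub : M * volume (A ∩ Js ∩ ball x R') ≤ ∫⁻ y in T, volume (A ∩ Js ∩ ball y δ) := by
      have h1 : ∀ y : E, volume (A ∩ Js ∩ ball y δ) = ∫⁻ z, W.indicator 1 (y, z) := by
        intro y
        have hfeq : (fun z : E => W.indicator (1 : E × E → ℝ≥0∞) (y, z)) =
            (A ∩ Js ∩ ball y δ).indicator 1 := by
          funext z
          by_cases hz : z ∈ A ∩ Js ∩ ball y δ
          · have hmem : (y, z) ∈ W := by
              refine ⟨⟨mem_univ _, hz.1⟩, ?_⟩
              have := mem_ball.1 hz.2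
              simpa [dist_comm] using this
            simp [indicator_of_mem, hmem, hz]
          · have hmem : (y, z) ∉ W := by
              intro hc
              exact hz ⟨hc.1.2, mem_ball.2 (by rw [dist_comm]; exact hc.2)⟩
            simp [indicator_of_notMem, hmem, hz]
        rw [hfeq, lintegral_indicator ((hA.inter hJmeas).inter measurableSet_ball)]
        simp
      have hunc : Measurable (Function.uncurry fun (y z : E) =>
          W.indicator (1 : E × E → ℝ≥0∞) (y, z)) := by
        have : (Function.uncurry fun (y z : E) => W.indicator (1 : E × E → ℝ≥0∞) (y, z)) =
            W.indicator 1 := rfl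
        rw [this]
        exact measurable_const.indicator hWmeas
      have hswap := lintegral_lintegral_swap (μ := volume.restrict T) (ν := volume)
        hunc.aemeasurable
      have h2 : ∀ z : E, (∫⁻ y in T, W.indicator (1 : E × E → ℝ≥0∞) (y, z)) =
          (A ∩ Js).indicator (fun z => volume (ball z δ ∩ T)) z := by
        intro z
        by_cases hz : z ∈ A ∩ Js
        · have hfeq : (fun y : E => W.indicator (1 : E × E → ℝ≥0∞) (y, z)) =
              (ball z δ).indicator 1 := by
            funext y
            by_cases hy : y ∈ ball z δ
            · have hmem : (y, z) ∈ W := ⟨⟨mem_univ _, hz⟩, mem_ball.1 hy⟩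
              simp [indicator_of_mem, hmem, hy]
            · have hmem : (y, z) ∉ W := fun hc => hy (mem_ball.2 hc.2)
              simp [indicator_of_notMem, hmem, hy]
          rw [hfeq, lintegral_indicator measurableSet_ball]
          simp [indicator_of_mem hz, Measure.restrict_restrict measurableSet_ball,
            Measure.restrict_apply measurableSet_ball]
        · have hfeq : (fun y : E => W.indicator (1 : E × E → ℝ≥0∞) (y, z)) = 0 := by
            funext y
            have hmem : (y, z) ∉ W := fun hc => hz hc.1.2
            simp [indicator_of_notMem, hmem]
          rw [hfeq]
          simp only [lintegral_zero_fun, indicator_of_notMem hz]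
      calc M * volume (A ∩ Js ∩ ball x R')
          = ∫⁻ z, (A ∩ Js ∩ ball x R').indicator (fun _ => M) z := by
            rw [lintegral_indicator_const ((hA.inter hJmeas).inter measurableSet_ball)]
        _ ≤ ∫⁻ z, (A ∩ Js).indicator (fun z => volume (ball z δ ∩ T)) z := by
            apply lintegral_mono
            intro z
            by_cases hz : z ∈ A ∩ Js ∩ ball x R'
            · rw [indicator_of_mem hz, indicator_of_mem hz.1]
              have hzb : dist x z < R + δ / 2 := by
                rw [← hRR']; rw [dist_comm]; exact mem_ball.1 hz.2
              calc M ≤ volume (Js ∩ (ball x R ∩ ball z δ)) :=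
                    chain_vol a b δ R hδ hδR x z hx hz.1.2 hzb
                _ ≤ volume (ball z δ ∩ T) := by
                    apply measure_mono
                    rintro w ⟨hw1, hw2, hw3⟩
                    exact ⟨hw3, hw1, hw2⟩
            · rw [indicator_of_notMem hz]
              exact zero_le
        _ = ∫⁻ z, ∫⁻ y in T, W.indicator (1 : E × E → ℝ≥0∞) (y, z) := by
            congr 1; funext z; rw [h2]
        _ = ∫⁻ y in T, ∫⁻ z, W.indicator (1 : E × E → ℝ≥0∞) (y, z) := hswap.symm
        _ = ∫⁻ y in T, volume (A ∩ Js ∩ ball y δ) := by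
            congr 1; funext y; rw [h1]
    -- main chain
    have hstep2 : ∫⁻ y in T, ε₀ * volume (A ∩ Js ∩ ball y δ) ≤ ∫⁻ y in T, P y A := by
      apply setLIntegral_mono (P.measurable_coe hA)
      intro y hy
      have hmeas : MeasurableSet (A ∩ Js ∩ ball y δ) :=
        (hA.inter hJmeas).inter measurableSet_ball
      calc ε₀ * volume (A ∩ Js ∩ ball y δ) ≤ P y (A ∩ Js ∩ ball y δ) :=
            hmin y hy.1 _ hmeas fun w hw => ⟨hw.1.2, hw.2⟩
        _ ≤ P y A := measure_mono fun w hw => hw.1.1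
    have hfinal : iterK P (n + 2) x A = ∫⁻ y, P y A ∂μ := by
      simp only [iterK]
      rw [Kernel.comp_apply' _ _ _ hA]
      rfl
    calc ε₀ * (ε₀ * M) ^ (n + 1) * volume (A ∩ Js ∩ ball x R')
        = C * (ε₀ * (M * volume (A ∩ Js ∩ ball x R'))) := by rw [hC]; ring
      _ ≤ C * (ε₀ * ∫⁻ y in T, volume (A ∩ Js ∩ ball y δ)) := by
          exact mul_le_mul_of_nonneg_left (mul_le_mul_of_nonneg_left hfub zero_le) zero_le
      _ = C * ∫⁻ y in T, ε₀ * volume (A ∩ Js ∩ ball y δ) := by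
          rw [lintegral_const_mul' _ _ ENNReal.ofReal_ne_top]
      _ ≤ C * ∫⁻ y in T, P y A := mul_le_mul_of_nonneg_left hstep2 zero_le
      _ = ∫⁻ y, P y A ∂(C • volume.restrict T) := by
          rw [lintegral_smul_measure, smul_eq_mul]
      _ ≤ ∫⁻ y, P y A ∂μ := lintegral_mono' hμge le_rfl
      _ = iterK P (n + 1 + 1) x A := hfinal.symm


/-- Proposition 6 (unifsmallprop): if 𝒳 is an open subset of ℝ^d containing a bounded
rectangle J ⊇ K_{2D} ∖ K_D, where K_{2D} ∖ K_D has positive Lebesgue measure, and P(x,dy)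
≥ ε Leb(dy) whenever x,y ∈ J with |y−x| < δ, then (A3) holds with
ν* = Uniform(K_{2D} ∖ K_D). -/
theorem A3_of_epsilon_delta
    (d : ℕ) (𝒳 : Set (EuclideanSpace ℝ (Fin d))) (hopen : IsOpen 𝒳)
    (P : Kernel (EuclideanSpace ℝ (Fin d)) (EuclideanSpace ℝ (Fin d))) [IsMarkovKernel P]
    (D : ℝ) (hD : 0 < D)
    (hjump : ∀ x, P x {y | dist x y ≤ D} = 1)
    (K : Set (EuclideanSpace ℝ (Fin d))) (hKmeas : MeasurableSet K) (hKne : K.Nonempty)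
    (hKbdd : Bornology.IsBounded K) (hKX : K ⊆ 𝒳)
    -- the bounded rectangle J
    (a b : Fin d → ℝ) (hab : ∀ i, a i < b i)
    (J : Set (EuclideanSpace ℝ (Fin d)))
    (hJ : J = {x | ∀ i, x i ∈ Ioo (a i) (b i)})
    (hSJ : cthickening (2 * D) K \ cthickening D K ⊆ J) (hJX : J ⊆ 𝒳)
    -- K_{2D} ∖ K_D has positive Lebesgue measure
    (hSpos : 0 < volume (cthickening (2 * D) K \ cthickening D K))
    -- the ε-δ minorization condition (7)
    (δ ε : ℝ) (hδ : 0 < δ) (hε : 0 < ε)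
    (hmin : ∀ x ∈ J, ∀ A : Set (EuclideanSpace ℝ (Fin d)), MeasurableSet A →
        A ⊆ J ∩ ball x δ → ENNReal.ofReal ε * volume A ≤ P x A) :
    -- (A3) with ν* = Uniform(K_{2D} ∖ K_D)
    ∃ ε' : ℝ≥0∞, 0 < ε' ∧ ∃ n₀ : ℕ, 1 ≤ n₀ ∧
      ∀ x ∈ cthickening (2 * D) K \ cthickening D K,
        ∀ A : Set (EuclideanSpace ℝ (Fin d)), MeasurableSet A →
          ε' * ((volume (cthickening (2 * D) K \ cthickening D K))⁻¹ *
              volume (A ∩ (cthickening (2 * D) K \ cthickening D K))) ≤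
            iterK P n₀ x A := by
  subst hJ
  set Js : Set (EuclideanSpace ℝ (Fin d)) :=
    {x : EuclideanSpace ℝ (Fin d) | ∀ i, x i ∈ Ioo (a i) (b i)} with hJs
  set S : Set (EuclideanSpace ℝ (Fin d)) := cthickening (2 * D) K \ cthickening D K with hSdef
  set ε₀ : ℝ≥0∞ := ENNReal.ofReal ε with hε₀
  set M : ℝ≥0∞ := ∏ i, ENNReal.ofReal (min (δ / 8 / (Real.sqrt d + 1)) ((b i - a i) / 2)) with hM
  have hsd : (0:ℝ) ≤ Real.sqrt d := Real.sqrt_nonneg _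
  have hM0 : M ≠ 0 := by
    rw [hM]
    apply Finset.prod_ne_zero_iff.2
    intro i _
    apply (ENNReal.ofReal_pos.2 ?_).ne'
    apply lt_min
    · positivity
    · have := hab i; linarith
  have hε₀0 : ε₀ ≠ 0 := (ENNReal.ofReal_pos.2 hε).ne'
  -- diameter bound of the rectangle
  set Rd : ℝ := Real.sqrt (∑ i, (b i - a i) ^ 2) with hRd
  have hdiam : ∀ x ∈ Js, ∀ z ∈ Js, dist x z ≤ Rd := by
    intro x hx z hz
    rw [EuclideanSpace.dist_eq, hRd]
    apply Real.sqrt_le_sqrt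
    apply Finset.sum_le_sum
    intro i _
    have h1 := (hx i).1; have h2 := (hx i).2
    have h3 := (hz i).1; have h4 := (hz i).2
    have hd : dist (x i) (z i) ≤ b i - a i := by
      rw [Real.dist_eq, abs_le]; constructor <;> linarith
    exact pow_le_pow_left₀ dist_nonneg hd 2
  -- choose n
  obtain ⟨n, hn⟩ := exists_nat_gt (Rd / (δ / 2))
  have hRdn : Rd < (n : ℝ) * (δ / 2) := by
    have := (div_lt_iff₀ (by linarith : (0:ℝ) < δ / 2)).1 hn
    linarith
  -- key minorization
  have hkey := key_minor P a b δ ε hδ hmin n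
  set C : ℝ≥0∞ := ε₀ * (ε₀ * M) ^ n with hC
  have hC0 : C ≠ 0 := by
    rw [hC]
    exact mul_ne_zero hε₀0 (pow_ne_zero _ (mul_ne_zero hε₀0 hM0))
  -- volume of S
  have hvolJ : volume Js < ⊤ := by
    rw [hJs, vol_box]
    exact ENNReal.prod_lt_top fun i _ => ENNReal.ofReal_lt_top
  have hvolS_ne_top : volume S ≠ ⊤ := (lt_of_le_of_lt (measure_mono hSJ) hvolJ).ne
  have hvolS_ne_zero : volume S ≠ 0 := hSpos.ne'
  refine ⟨C * volume S, ?_, n + 1, le_add_self, ?_⟩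
  · exact ENNReal.mul_pos hC0 hvolS_ne_zero
  · intro x hx A hA
    have hxJ : x ∈ Js := hSJ hx
    have hsub : A ∩ S ⊆ A ∩ Js ∩ ball x (δ + n * (δ / 2)) := by
      rintro w ⟨hwA, hwS⟩
      refine ⟨⟨hwA, hSJ hwS⟩, ?_⟩
      rw [mem_ball]
      calc dist w x ≤ Rd := hdiam w (hSJ hwS) x hxJ
        _ < (n : ℝ) * (δ / 2) := hRdn
        _ ≤ δ + (n : ℝ) * (δ / 2) := by linarith
    calc C * volume S * ((volume S)⁻¹ * volume (A ∩ S))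
        = C * (volume S * (volume S)⁻¹) * volume (A ∩ S) := by ring
      _ = C * volume (A ∩ S) := by
          rw [ENNReal.mul_inv_cancel hvolS_ne_zero hvolS_ne_top, mul_one]
      _ ≤ C * volume (A ∩ Js ∩ ball x (δ + n * (δ / 2))) :=
          mul_le_mul_of_nonneg_left (measure_mono hsub) zero_le
      _ ≤ iterK P (n + 1) x A := hkey x hxJ A hA
end

section
/- In the adversarial setup, assume (A1) holds with constant M and probability measure μ*. Let {Y_n} be the cemetery process which starts with Y_0 distributed according to μ*, follows the transition kernel P, and dies as soon as it hits K_D. Let ℓ₀ = sup{η(x,𝟎) : x ∈ K_D}, for L > ℓ₀ let B_L = {x ∈ 𝒳 : η(x,𝟎) ≥ L}, and let N_L be the total number of iterations the cemetery process spends in B_L before it dies. Then for every n ∈ ℕ, every L > ℓ₀, and every starting point x ∈ K of the adversarial process, ℙ(X_n ∈ B_L | X_0 = x) ≤ M · 𝔼(N_L). -/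
open MeasureTheory ProbabilityTheory Filter Metric Set
open scoped ENNReal Topology

/-- Lemma 8 (lemma-cembound): under (A1), for every n, every L > ℓ₀ and every starting
point x ∈ K, ℙ(X_n ∈ B_L) ≤ M ⬝ 𝔼(N_L), where N_L is the occupation time of
B_L = {z : η(z,𝟎) ≥ L} by the cemetery process started from μ* and killed on hitting K_D.
The expected occupation time 𝔼(N_L) is expressed as ∑_{j≥0} ℙ(Y_j ∈ B_L, not yet killed). -/
theorem cemetery_occupation_bound
    {𝒳 : Type*} [MeasurableSpace 𝒳] [MetricSpace 𝒳] [BorelSpace 𝒳] (o : 𝒳)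
    (P : Kernel 𝒳 𝒳) [IsMarkovKernel P]
    (D : ℝ) (hD : 0 < D) (hjump : ∀ x, P x {y | dist x y ≤ D} = 1)
    (K : Set 𝒳) (hKmeas : MeasurableSet K) (hKne : K.Nonempty)
    (hKbdd : Bornology.IsBounded K)
    -- (A1)
    (M : ℝ≥0∞) (hM : M ≠ ⊤) (μstar : Measure 𝒳) [IsProbabilityMeasure μstar]
    (hconc : μstar (cthickening (2 * D) K \ cthickening D K) = 1)
    (hA1 : ∀ x ∈ cthickening D K \ K, ∀ A : Set 𝒳,
        A ⊆ cthickening (2 * D) K \ cthickening D K → MeasurableSet A →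
        P x A ≤ M * μstar A)
    -- the adversarial process, started at x ∈ K
    {Ω : Type*} [MeasurableSpace Ω] (μ : Measure Ω) [IsProbabilityMeasure μ]
    (x : 𝒳) (hx : x ∈ K) (Xp : ℕ → Ω → 𝒳)
    (hadv : IsAdversarial P K D x μ Xp)
    -- L > ℓ₀ = sup of distances from 𝟎 over K_D
    (L : ℝ) (hL : sSup ((fun z => dist z o) '' cthickening D K) < L)
    (n : ℕ) :
    μ {ω | L ≤ dist (Xp n ω) o} ≤
      M * ∑' j : ℕ, survMeas P (cthickening D K) μstar j {z | L ≤ dist z o} := by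
    classical
  obtain ⟨hXmeas, hX0, hMarkov, hKstep⟩ := hadv
  set C : Set 𝒳 := cthickening D K with hCdef
  have hCmeas : MeasurableSet C := isClosed_cthickening.measurableSet
  have hKC : K ⊆ C := self_subset_cthickening K
  have hdist : Measurable fun z : 𝒳 => dist z o :=
    (continuous_id.dist continuous_const).measurable
  set BL : Set 𝒳 := {z | L ≤ dist z o} with hBLdef
  have hBLmeas : MeasurableSet BL := measurableSet_le measurable_const hdist
  obtain ⟨R, hR⟩ := (hKbdd.cthickening (δ := D)).subset_closedBall o
  have hbdd : BddAbove ((fun z => dist z o) '' C) := by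
    refine ⟨R, ?_⟩
    rintro r ⟨z, hz, rfl⟩
    exact mem_closedBall.mp (hR hz)
  have hCL : ∀ z ∈ C, dist z o < L := fun z hz =>
    lt_of_le_of_lt (le_csSup hbdd ⟨z, hz, rfl⟩) hL
  have hBLC : BL ⊆ Cᶜ := fun z hzB hzC => absurd hzB (not_le.2 (hCL z hzC))
  rcases Nat.eq_zero_or_pos n with rfl | hn
  · have h0 : {ω | L ≤ dist (Xp 0 ω) o} = ∅ := by
      ext ω
      simp only [mem_setOf_eq, mem_empty_iff_false, iff_false, not_le]
      rw [hX0 ω]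
      exact hCL x (hKC hx)
    rw [h0]
    simp
  -- comap measurability helper
  have hcomap : ∀ (m : ℕ) (S : Fin (m + 1) → Set 𝒳), (∀ i, MeasurableSet (S i)) →
      MeasurableSet[MeasurableSpace.comap (fun ω (i : Fin (m + 1)) => Xp i ω) inferInstance]
        {ω | ∀ i : Fin (m + 1), Xp i ω ∈ S i} := by
    intro m S hS
    refine MeasurableSpace.measurableSet_comap.mpr
      ⟨⋂ i, (fun f : Fin (m + 1) → 𝒳 => f i) ⁻¹' S i,
        MeasurableSet.iInter fun i => measurable_pi_apply i (hS i), ?_⟩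
    ext ω
    simp [Set.mem_iInter]
  have hEcomap : ∀ σ : ℕ,
      MeasurableSet[MeasurableSpace.comap (fun ω (i : Fin (σ + 1)) => Xp i ω) inferInstance]
        {ω | Xp σ ω ∈ C} := by
    intro σ
    have hset : {ω | ∀ i : Fin (σ + 1), Xp i ω ∈ (if ((i : ℕ) = σ) then C else univ)}
        = {ω | Xp σ ω ∈ C} := by
      ext ω
      constructor
      · intro h
        have := h (Fin.last σ)
        simpa [Fin.val_last] using this
      · intro h i
        by_cases hi : (i : ℕ) = σ
        · simpa [hi] using h
        · simp [hi]
    rw [← hset]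
    exact hcomap σ _ (fun i => by split <;> simp [hCmeas])
  set F : ℕ → ℕ → Set Ω := fun σ j =>
    {ω | Xp σ ω ∈ C \ K ∧ ∀ k, σ < k → k ≤ j → Xp k ω ∉ C} with hFdef
  have hFcomap : ∀ σ j, σ < j →
      MeasurableSet[MeasurableSpace.comap (fun ω (i : Fin (j + 1)) => Xp i ω) inferInstance]
        (F σ j) := by
    intro σ j hσj
    have hset : {ω | ∀ i : Fin (j + 1), Xp i ω ∈
          (if ((i : ℕ) = σ) then C \ K else if σ < (i : ℕ) then Cᶜ else univ)} = F σ j := by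
      ext ω
      constructor
      · intro h
        refine ⟨?_, ?_⟩
        · have := h ⟨σ, by omega⟩
          simpa using this
        · intro k hk1 hk2
          have hk := h ⟨k, by omega⟩
          rw [if_neg (by simp; omega), if_pos (by simpa using hk1)] at hk
          simpa using hk
      · rintro ⟨h1, h2⟩ i
        by_cases hi : (i : ℕ) = σ
        · simpa [hi] using h1
        · by_cases hi2 : σ < (i : ℕ)
          · simp only [if_neg hi, if_pos hi2]
            exact h2 i hi2 (by omega)
          · simp [hi, hi2]
    rw [← hset]
    refine hcomap j _ (fun i => ?_)
    split
    · exact hCmeas.diff hKmeas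
    · split
      · exact hCmeas.compl
      · exact MeasurableSet.univ
  -- the (A1)-based one-step bound
  have hPbound : ∀ (A : Set 𝒳), MeasurableSet A → ∀ x' ∈ C \ K,
      P x' (A ∩ Cᶜ) ≤ M * μstar (A ∩ Cᶜ) := by
    intro A hA x' hx'
    set J : Set 𝒳 := {y | dist x' y ≤ D} with hJ
    have hJmeas : MeasurableSet J :=
      measurableSet_le ((continuous_const.dist continuous_id).measurable) measurable_const
    have hJ1 : P x' Jᶜ = 0 := by
      have h1 := hjump x'
      rw [measure_compl hJmeas (measure_ne_top _ _), h1]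
      simp
    have hsub : (A ∩ Cᶜ) ∩ J ⊆ cthickening (2 * D) K \ C := by
      rintro y ⟨⟨hyA, hyC⟩, hyJ⟩
      refine ⟨?_, hyC⟩
      have hx'K : EMetric.infEdist x' K ≤ ENNReal.ofReal D := mem_cthickening_iff.mp hx'.1
      have hed : edist y x' ≤ ENNReal.ofReal D := by
        rw [edist_dist]
        exact ENNReal.ofReal_le_ofReal (by rw [dist_comm]; exact hyJ)
      rw [mem_cthickening_iff]
      calc EMetric.infEdist y K ≤ edist y x' + EMetric.infEdist x' K :=
            EMetric.infEdist_le_edist_add_infEdist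
        _ ≤ ENNReal.ofReal D + ENNReal.ofReal D := add_le_add hed hx'K
        _ = ENNReal.ofReal (2 * D) := by
            rw [two_mul, ENNReal.ofReal_add hD.le hD.le]
    calc P x' (A ∩ Cᶜ) ≤ P x' ((A ∩ Cᶜ) ∩ J ∪ Jᶜ) := by
          refine measure_mono ?_
          intro y hy
          by_cases h : y ∈ J
          · exact Or.inl ⟨hy, h⟩
          · exact Or.inr h
      _ ≤ P x' ((A ∩ Cᶜ) ∩ J) + P x' Jᶜ := measure_union_le _ _
      _ = P x' ((A ∩ Cᶜ) ∩ J) := by rw [hJ1, add_zero]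
      _ ≤ M * μstar ((A ∩ Cᶜ) ∩ J) :=
          hA1 x' hx' _ hsub ((hA.inter hCmeas.compl).inter hJmeas)
      _ ≤ M * μstar (A ∩ Cᶜ) := mul_le_mul_right (measure_mono inter_subset_left) M
  -- main inductive claim
  have claim : ∀ σ t (A : Set 𝒳), MeasurableSet A →
      μ (F σ (σ + 1 + t) ∩ {ω | Xp (σ + 1 + t) ω ∈ A ∩ Cᶜ}) ≤
        M * survMeas P C μstar t (A ∩ Cᶜ) := by
    intro σ t
    induction t with
    | zero =>
      intro A hA
      have hACmeas : MeasurableSet (A ∩ Cᶜ) := hA.inter hCmeas.compl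
      have hseteq : F σ (σ + 1 + 0) ∩ {ω | Xp (σ + 1 + 0) ω ∈ A ∩ Cᶜ}
          = {ω | Xp σ ω ∈ C} ∩ {ω | Xp σ ω ∉ K} ∩ {ω | Xp (σ + 1) ω ∈ A ∩ Cᶜ} := by
        ext ω
        simp only [hFdef, mem_inter_iff, mem_setOf_eq, mem_diff]
        constructor
        · rintro ⟨⟨⟨h1, h2⟩, h3⟩, h4⟩
          exact ⟨⟨h1, h2⟩, h4⟩
        · rintro ⟨⟨h1, h2⟩, h4⟩
          refine ⟨⟨⟨h1, h2⟩, ?_⟩, h4⟩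
          intro k hk1 hk2
          have hk : k = σ + 1 := by omega
          subst hk
          exact fun hc => h4.2 hc
      rw [hseteq, hMarkov σ (A ∩ Cᶜ) hACmeas {ω | Xp σ ω ∈ C} (hEcomap σ)]
      have hSm : MeasurableSet ({ω | Xp σ ω ∈ C} ∩ {ω | Xp σ ω ∉ K}) :=
        ((hXmeas σ) hCmeas).inter ((hXmeas σ) hKmeas.compl)
      calc ∫⁻ ω in {ω | Xp σ ω ∈ C} ∩ {ω | Xp σ ω ∉ K}, P (Xp σ ω) (A ∩ Cᶜ) ∂μ
          ≤ ∫⁻ _ in {ω | Xp σ ω ∈ C} ∩ {ω | Xp σ ω ∉ K}, M * μstar (A ∩ Cᶜ) ∂μ :=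
            setLIntegral_mono' hSm (fun ω hω => hPbound A hA (Xp σ ω) ⟨hω.1, hω.2⟩)
        _ = M * μstar (A ∩ Cᶜ) * μ ({ω | Xp σ ω ∈ C} ∩ {ω | Xp σ ω ∉ K}) :=
            setLIntegral_const _ _
        _ ≤ M * μstar (A ∩ Cᶜ) * 1 := mul_le_mul_right prob_le_one _
        _ = M * survMeas P C μstar 0 (A ∩ Cᶜ) := by rw [mul_one]; rfl
    | succ t ih =>
      intro A hA
      have hACmeas : MeasurableSet (A ∩ Cᶜ) := hA.inter hCmeas.compl
      set j := σ + 1 + t with hj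
      have hσj : σ < j := by omega
      have hFj_subC : ∀ ω ∈ F σ j, Xp j ω ∉ C := fun ω hω => hω.2 j (by omega) le_rfl
      have hseteq : F σ (σ + 1 + (t + 1)) ∩ {ω | Xp (σ + 1 + (t + 1)) ω ∈ A ∩ Cᶜ}
          = F σ j ∩ {ω | Xp j ω ∉ K} ∩ {ω | Xp (j + 1) ω ∈ A ∩ Cᶜ} := by
        have hjj : σ + 1 + (t + 1) = j + 1 := by omega
        rw [hjj]
        ext ω
        simp only [hFdef, mem_inter_iff, mem_setOf_eq]
        constructor
        · rintro ⟨⟨h1, h2⟩, h4⟩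
          exact ⟨⟨⟨h1, fun k hk1 hk2 => h2 k hk1 (by omega)⟩,
            fun hK => (h2 j hσj (by omega)) (hKC hK)⟩, h4⟩
        · rintro ⟨⟨⟨h1, h2⟩, _⟩, h4⟩
          refine ⟨⟨h1, ?_⟩, h4⟩
          intro k hk1 hk2
          rcases Nat.lt_or_ge k (j + 1) with h | h
          · exact h2 k hk1 (by omega)
          · have hk : k = j + 1 := by omega
            subst hk
            exact fun hc => h4.2 hc
      rw [hseteq, hMarkov j (A ∩ Cᶜ) hACmeas (F σ j) (hFcomap σ j hσj)]
      have hFK : F σ j ∩ {ω | Xp j ω ∉ K} = F σ j :=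
        inter_eq_left.mpr (fun ω hω hK => hFj_subC ω hω (hKC hK))
      rw [hFK]
      set m := survMeas P C μstar t with hm
      have hg : Measurable fun y => P y (A ∩ Cᶜ) := P.measurable_coe hACmeas
      have hνle : (μ.restrict (F σ j)).map (Xp j) ≤ M • m := by
        refine Measure.le_iff.2 (fun s hs => ?_)
        rw [Measure.map_apply (hXmeas j) hs, Measure.restrict_apply (hXmeas j hs)]
        have h1 : Xp j ⁻¹' s ∩ F σ j ⊆ F σ j ∩ {ω | Xp j ω ∈ s ∩ Cᶜ} :=
          fun ω hω => ⟨hω.2, hω.1, hFj_subC ω hω.2⟩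
        calc μ (Xp j ⁻¹' s ∩ F σ j) ≤ μ (F σ j ∩ {ω | Xp j ω ∈ s ∩ Cᶜ}) := measure_mono h1
          _ ≤ M * m (s ∩ Cᶜ) := ih s hs
          _ ≤ M * m s := mul_le_mul_right (measure_mono inter_subset_left) M
          _ = (M • m) s := by simp [Measure.smul_apply]
      calc ∫⁻ ω in F σ j, P (Xp j ω) (A ∩ Cᶜ) ∂μ
          = ∫⁻ y, P y (A ∩ Cᶜ) ∂((μ.restrict (F σ j)).map (Xp j)) :=
            (lintegral_map hg (hXmeas j)).symm
        _ ≤ ∫⁻ y, P y (A ∩ Cᶜ) ∂(M • m) := lintegral_mono' hνle le_rfl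
        _ = M * ∫⁻ y, P y (A ∩ Cᶜ) ∂m := lintegral_smul_measure _ _
        _ = M * (m.bind (fun z => P z)) (A ∩ Cᶜ) := by
            rw [Measure.bind_apply hACmeas P.measurable.aemeasurable]
        _ = M * survMeas P C μstar (t + 1) (A ∩ Cᶜ) := by
            show _ = M * ((m.bind (fun z => P z)).restrict Cᶜ) (A ∩ Cᶜ)
            rw [Measure.restrict_apply hACmeas, inter_assoc, inter_self]
  -- per-σ bound
  have key : ∀ σ, σ < n →
      μ ({ω | Xp σ ω ∈ C ∧ ∀ k, σ < k → k ≤ n → Xp k ω ∉ C} ∩ {ω | Xp n ω ∈ BL}) ≤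
        M * survMeas P C μstar (n - σ - 1) BL := by
    intro σ hσ
    have hBLcap : BL ∩ Cᶜ = BL := inter_eq_left.mpr hBLC
    have hclaim := claim σ (n - σ - 1) BL hBLmeas
    rw [show σ + 1 + (n - σ - 1) = n by omega, hBLcap] at hclaim
    have h1 : {ω | Xp σ ω ∈ C ∧ ∀ k, σ < k → k ≤ n → Xp k ω ∉ C} ∩ {ω | Xp n ω ∈ BL}
        ⊆ (F σ n ∩ {ω | Xp n ω ∈ BL}) ∪
          ({ω | Xp σ ω ∈ K} ∩ {ω | Xp (σ + 1) ω ∉ cthickening D K}) := by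
      rintro ω ⟨⟨hh1, hh2⟩, hh3⟩
      by_cases hK : Xp σ ω ∈ K
      · exact Or.inr ⟨hK, hh2 (σ + 1) (by omega) (by omega)⟩
      · exact Or.inl ⟨⟨⟨hh1, hK⟩, hh2⟩, hh3⟩
    calc μ ({ω | Xp σ ω ∈ C ∧ ∀ k, σ < k → k ≤ n → Xp k ω ∉ C} ∩ {ω | Xp n ω ∈ BL})
        ≤ μ (F σ n ∩ {ω | Xp n ω ∈ BL}) +
            μ ({ω | Xp σ ω ∈ K} ∩ {ω | Xp (σ + 1) ω ∉ cthickening D K}) :=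
          (measure_mono h1).trans (measure_union_le _ _)
      _ = μ (F σ n ∩ {ω | Xp n ω ∈ BL}) := by rw [hKstep σ, add_zero]
      _ ≤ M * survMeas P C μstar (n - σ - 1) BL := hclaim
  -- covering by last visit to C
  have hcover : {ω | L ≤ dist (Xp n ω) o} ⊆
      ⋃ σ ∈ Finset.range n,
        ({ω | Xp σ ω ∈ C ∧ ∀ k, σ < k → k ≤ n → Xp k ω ∉ C} ∩ {ω | Xp n ω ∈ BL}) := by
    intro ω hω
    have hωBL : Xp n ω ∈ BL := hω
    have h0C : Xp 0 ω ∈ C := by rw [hX0 ω]; exact hKC hx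
    set T := (Finset.range (n + 1)).filter (fun k => Xp k ω ∈ C) with hT
    have hTne : T.Nonempty := ⟨0, by simp [hT, h0C]⟩
    obtain ⟨σ, hσmem, hσtop⟩ : ∃ σ ∈ T, ∀ k ∈ T, k ≤ σ :=
      ⟨T.max' hTne, T.max'_mem hTne, fun k hk => T.le_max' k hk⟩
    have hσn : σ < n + 1 := Finset.mem_range.mp (Finset.mem_filter.mp hσmem).1
    have hσC : Xp σ ω ∈ C := (Finset.mem_filter.mp hσmem).2
    have hσlt : σ < n := by
      rcases Nat.lt_or_ge σ n with h | h
      · exact h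
      · exfalso
        have hσeq : σ = n := by omega
        exact (hBLC hωBL) (hσeq ▸ hσC)
    refine mem_iUnion.2 ⟨σ, mem_iUnion.2 ⟨Finset.mem_range.2 hσlt, ⟨⟨hσC, ?_⟩, hωBL⟩⟩⟩
    intro k hk1 hk2 hkC
    have hkT : k ∈ T :=
      Finset.mem_filter.mpr ⟨Finset.mem_range.mpr (by omega), hkC⟩
    have := hσtop k hkT
    omega
  calc μ {ω | L ≤ dist (Xp n ω) o}
      ≤ ∑ σ ∈ Finset.range n,
          μ ({ω | Xp σ ω ∈ C ∧ ∀ k, σ < k → k ≤ n → Xp k ω ∉ C} ∩ {ω | Xp n ω ∈ BL}) :=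
        (measure_mono hcover).trans (measure_biUnion_finset_le _ _)
    _ ≤ ∑ σ ∈ Finset.range n, M * survMeas P C μstar (n - σ - 1) BL :=
        Finset.sum_le_sum fun σ hσ => key σ (Finset.mem_range.1 hσ)
    _ = M * ∑ σ ∈ Finset.range n, survMeas P C μstar (n - 1 - σ) BL := by
        rw [Finset.mul_sum]
        refine Finset.sum_congr rfl fun σ _ => ?_
        have hσn : n - σ - 1 = n - 1 - σ := by omega
        rw [hσn]
    _ = M * ∑ j ∈ Finset.range n, survMeas P C μstar j BL := by
        congr 1
        exact Finset.sum_range_reflect (fun j => survMeas P C μstar j BL) n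
    _ ≤ M * ∑' j, survMeas P C μstar j BL := mul_le_mul_right (ENNReal.sum_le_tsum _) M
end

section
/- Let A, B ⊆ ℝ^d be two closed balls with radii r and R where 0 < r ≤ R, such that their centers are a distance w apart with w ≤ 3r/2 + (R − r). Then Leb(A ∩ B) ≥ r^d · v_d, where v_d is the Lebesgue measure of the intersection of two unit balls in ℝ^d whose centers are a distance 3/2 apart. -/
open MeasureTheory Metric
open scoped ENNReal Pointwise

/-- Lemma 15 (balloverlap): if A, B ⊆ ℝ^d are closed balls of radii 0 < r ≤ R whose
centers are at distance w ≤ 3r/2 + (R − r), then Leb(A ∩ B) ≥ r^d · v_d, where v_d is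
the volume of the intersection of two unit balls at distance 3/2. -/
theorem ball_overlap_volume
    (d : ℕ) (hd : 0 < d)
    (v : ℝ≥0∞)
    (hv : v = volume (closedBall (0 : EuclideanSpace ℝ (Fin d)) 1 ∩
        closedBall (EuclideanSpace.single (⟨0, hd⟩ : Fin d) ((3 : ℝ) / 2)) 1))
    (x y : EuclideanSpace ℝ (Fin d)) (r R : ℝ) (hr : 0 < r) (hrR : r ≤ R)
    (hw : dist x y ≤ 3 * r / 2 + (R - r)) :
    ENNReal.ofReal r ^ d * v ≤ volume (closedBall x r ∩ closedBall y R) := by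
  set w := dist x y with hwdef
  have hwnn : 0 ≤ w := dist_nonneg
  obtain ⟨u, hu, hyu⟩ : ∃ u : EuclideanSpace ℝ (Fin d), ‖u‖ = 1 ∧ y = x + w • u := by
    rcases eq_or_ne y x with h | h
    · refine ⟨EuclideanSpace.single ⟨0, hd⟩ 1,
        by rw [EuclideanSpace.norm_single]; norm_num, ?_⟩
      have hw0 : w = 0 := by simp [hwdef, h]
      simp [h, hw0]
    · refine ⟨‖y - x‖⁻¹ • (y - x), ?_, ?_⟩
      · rw [norm_smul, norm_inv, norm_norm, inv_mul_cancel₀ (norm_ne_zero_iff.2 (sub_ne_zero.2 h))]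
      · have hw' : w = ‖y - x‖ := by rw [hwdef, dist_comm, dist_eq_norm]
        rw [hw', smul_smul, mul_inv_cancel₀ (norm_ne_zero_iff.2 (sub_ne_zero.2 h)), one_smul]
        abel
  set z : EuclideanSpace ℝ (Fin d) := x + (3 * r / 2) • u with hz
  -- containment
  have hsub : closedBall x r ∩ closedBall z r ⊆ closedBall x r ∩ closedBall y R := by
    rintro p ⟨hp1, hp2⟩
    refine ⟨hp1, ?_⟩
    rw [mem_closedBall, dist_eq_norm] at hp1 hp2 ⊢
    rcases le_or_gt w (3 * r / 2) with hcase | hcase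
    · set t : ℝ := w / (3 * r / 2) with ht
      have ht0 : 0 ≤ t := by positivity
      have ht1 : t ≤ 1 := by
        rw [ht, div_le_one (by positivity)]; exact hcase
      have ht3 : t * (3 * r / 2) = w := by
        rw [ht]; field_simp
      have key : p - y = (1 - t) • (p - x) + t • (p - z) := by
        rw [hyu, ← ht3, hz]
        module
      calc ‖p - y‖ = ‖(1 - t) • (p - x) + t • (p - z)‖ := by rw [key]
        _ ≤ ‖(1 - t) • (p - x)‖ + ‖t • (p - z)‖ := norm_add_le _ _
        _ = (1 - t) * ‖p - x‖ + t * ‖p - z‖ := by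
            rw [norm_smul, norm_smul, Real.norm_eq_abs, Real.norm_eq_abs,
              abs_of_nonneg (by linarith), abs_of_nonneg ht0]
        _ ≤ (1 - t) * r + t * r := by
            have h1t : (0:ℝ) ≤ 1 - t := by linarith
            gcongr
        _ = r := by ring
        _ ≤ R := hrR
    · have hzy : ‖z - y‖ = w - 3 * r / 2 := by
        have hzy' : z - y = (3 * r / 2 - w) • u := by rw [hyu, hz]; module
        rw [hzy', norm_smul, hu, mul_one, Real.norm_eq_abs, abs_of_nonpos (by linarith)]
        ring
      have htri : ‖p - y‖ ≤ ‖p - z‖ + ‖z - y‖ := by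
        have h' := norm_add_le (p - z) (z - y)
        rwa [sub_add_sub_cancel] at h'
      calc ‖p - y‖ ≤ ‖p - z‖ + ‖z - y‖ := htri
        _ ≤ r + (w - 3 * r / 2) := by rw [hzy]; gcongr
        _ ≤ R := by linarith
  -- the reflection sending the standard configuration direction to u
  set a : EuclideanSpace ℝ (Fin d) := EuclideanSpace.single (⟨0, hd⟩ : Fin d) ((3 : ℝ) / 2)
    with ha
  set b : EuclideanSpace ℝ (Fin d) := ((3 : ℝ) / 2) • u with hb
  have hab : ‖a‖ = ‖b‖ := by
    rw [ha, hb, EuclideanSpace.norm_single, norm_smul, hu, mul_one]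
  set Φ : EuclideanSpace ℝ (Fin d) ≃ₗᵢ[ℝ] EuclideanSpace ℝ (Fin d) :=
    Submodule.reflection (ℝ ∙ (a - b))ᗮ with hΦ
  have hΦa : Φ a = b := Submodule.reflection_sub hab
  set g : EuclideanSpace ℝ (Fin d) → EuclideanSpace ℝ (Fin d) := fun p => x + r • Φ p with hg
  have hg0 : g 0 = x := by simp [hg]
  have hga : g a = z := by
    rw [hg]; simp only [hΦa, hb, hz, smul_smul]
    congr 1
    rw [mul_comm]
    congr 1
    ring
  have himg : ∀ (c : EuclideanSpace ℝ (Fin d)) (s : ℝ),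
      g '' closedBall c s = closedBall (g c) (r * s) := by
    intro c s
    have h1 : Φ '' closedBall c s = closedBall (Φ c) s := by
      exact Φ.toIsometryEquiv.image_closedBall c s
    have h2 : (fun q : EuclideanSpace ℝ (Fin d) => r • q) '' closedBall (Φ c) s
        = closedBall (r • Φ c) (r * s) := by
      have h2' := smul_closedBall' (ne_of_gt hr) (Φ c) s
      rw [Real.norm_eq_abs, abs_of_pos hr] at h2'
      rw [← h2']
      rfl
    have h3 : (fun q : EuclideanSpace ℝ (Fin d) => x + q) '' closedBall (r • Φ c) (r * s)
        = closedBall (x + r • Φ c) (r * s) := by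
      ext q
      constructor
      · rintro ⟨p, hp, rfl⟩
        rw [mem_closedBall, dist_eq_norm] at hp ⊢
        rwa [add_sub_add_left_eq_sub]
      · intro hq
        refine ⟨q - x, ?_, by module⟩
        rw [mem_closedBall, dist_eq_norm] at hq ⊢
        rw [sub_sub]
        exact hq
    calc g '' closedBall c s
        = (fun q : EuclideanSpace ℝ (Fin d) => x + q) ''
            ((fun q : EuclideanSpace ℝ (Fin d) => r • q) '' (Φ '' closedBall c s)) := by
          rw [Set.image_image, Set.image_image]
      _ = closedBall (x + r • Φ c) (r * s) := by rw [h1, h2, h3]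
      _ = closedBall (g c) (r * s) := rfl
  have hginj : Function.Injective g := by
    intro p q hpq
    have h1 : r • Φ p = r • Φ q := by
      have h2 := hpq
      simpa [hg] using h2
    exact Φ.injective (smul_right_injective _ (ne_of_gt hr) h1)
  have himg2 : g '' (closedBall (0 : EuclideanSpace ℝ (Fin d)) 1 ∩ closedBall a 1)
      = closedBall x r ∩ closedBall z r := by
    rw [Set.image_inter hginj, himg 0 1, himg a 1, hg0, hga, mul_one]
  have hmeas : MeasurableSet (closedBall (0 : EuclideanSpace ℝ (Fin d)) 1 ∩ closedBall a 1) :=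
    measurableSet_closedBall.inter measurableSet_closedBall
  have hvol : volume (closedBall x r ∩ closedBall z r) = ENNReal.ofReal r ^ d * v := by
    rw [← himg2]
    have step : g '' (closedBall (0 : EuclideanSpace ℝ (Fin d)) 1 ∩ closedBall a 1)
        = x +ᵥ (r • (Φ '' (closedBall (0 : EuclideanSpace ℝ (Fin d)) 1 ∩ closedBall a 1))) := by
      rw [← Set.image_smul, ← Set.image_vadd, Set.image_image, Set.image_image]
      rfl
    rw [step, measure_vadd, Measure.addHaar_smul]
    have hΦvol : volume (Φ '' (closedBall (0 : EuclideanSpace ℝ (Fin d)) 1 ∩ closedBall a 1))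
        = volume (closedBall (0 : EuclideanSpace ℝ (Fin d)) 1 ∩ closedBall a 1) := by
      rw [Set.image_eq_preimage_of_inverse Φ.symm_apply_apply Φ.apply_symm_apply]
      exact Φ.symm.measurePreserving.measure_preimage hmeas.nullMeasurableSet
    rw [hΦvol, finrank_euclideanSpace_fin, ← hv, abs_of_pos (pow_pos hr d),
      ENNReal.ofReal_pow hr.le]
  rw [← hvol]
  exact measure_mono hsub
end

section
/- Let P be a Markov transition kernel on an open subset 𝒳 ⊆ ℝ^d. Let J = (a₁,b₁) × ⋯ × (a_d,b_d) ⊆ 𝒳 be a rectangular subset, where a_i < b_i are extended real numbers. Suppose there are δ > 0 and ε > 0 such that P(x, dy) ≥ ε Leb(dy) whenever x, y ∈ J with |y − x| < δ. Then for each n ∈ ℕ there is β_n > 0 such that Pⁿ(x, dy) ≥ β_n Leb(dy) whenever x, y ∈ J with |y − x| < δ(n+1)/2. -/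
open MeasureTheory ProbabilityTheory Filter Metric Set
open scoped ENNReal Topology

section Aux

lemma iterK_one_apply {X : Type*} [MeasurableSpace X] (P : Kernel X X) (x : X) :
    iterK P 1 x = P x := by
  show (P.comp (Kernel.deterministic id measurable_id)) x = P x
  rw [Kernel.comp_apply, Kernel.deterministic_apply, Measure.dirac_bind (Kernel.measurable P)]
  simp

lemma iterK_succ_apply' {X : Type*} [MeasurableSpace X] (P : Kernel X X) (n : ℕ) (x : X)
    (A : Set X) (hA : MeasurableSet A) :
    iterK P (n + 1) x A = ∫⁻ y, P y A ∂(iterK P n x) := by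
  show (P.comp (iterK P n)) x A = _
  rw [Kernel.comp_apply' _ _ _ hA]

lemma interval_aux (aE bE : EReal) (hab : aE < bE) (r : ℝ) (hr : 0 < r) :
    ∃ m : ℝ, 0 < m ∧ ∀ yv : ℝ, aE < (yv : EReal) → (yv : EReal) < bE →
      ∃ u : ℝ, Ioo u (u + m) ⊆ {t : ℝ | aE < (t : EReal) ∧ (t : EReal) < bE ∧ |t - yv| < r} := by
  induction aE with
  | top => exact absurd hab (by simp)
  | bot =>
    induction bE with
    | bot => exact absurd hab (by simp)
    | top =>
      refine ⟨r, hr, fun yv _ _ => ⟨yv - r/2, fun t ht => ?_⟩⟩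
      obtain ⟨h1, h2⟩ := ht
      refine ⟨bot_lt_iff_ne_bot.2 (EReal.coe_ne_bot t), EReal.coe_lt_top t, ?_⟩
      rw [abs_lt]; constructor <;> linarith
    | coe bv =>
      refine ⟨r/2, by linarith, fun yv _ hy2 => ⟨yv - r/2, fun t ht => ?_⟩⟩
      obtain ⟨h1, h2⟩ := ht
      have hyb : yv < bv := by exact_mod_cast hy2
      refine ⟨bot_lt_iff_ne_bot.2 (EReal.coe_ne_bot t),
        by exact_mod_cast (by linarith : t < bv), ?_⟩
      rw [abs_lt]; constructor <;> linarith
  | coe av =>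
    induction bE with
    | bot => exact absurd hab (by simp)
    | top =>
      refine ⟨r/2, by linarith, fun yv hy1 _ => ⟨yv, fun t ht => ?_⟩⟩
      obtain ⟨h1, h2⟩ := ht
      have hya : av < yv := by exact_mod_cast hy1
      refine ⟨by exact_mod_cast (by linarith : av < t), EReal.coe_lt_top t, ?_⟩
      rw [abs_lt]; constructor <;> linarith
    | coe bv =>
      have hab' : av < bv := by exact_mod_cast hab
      refine ⟨min r ((bv - av)/2), lt_min hr (by linarith), fun yv hy1 hy2 => ?_⟩
      have hya : av < yv := by exact_mod_cast hy1
      have hyb : yv < bv := by exact_mod_cast hy2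
      set m := min r ((bv - av)/2) with hmdef
      have hm0 : 0 < m := lt_min hr (by linarith)
      have hmr : m ≤ r := min_le_left _ _
      have hm2 : 2*m ≤ bv - av := by
        have := min_le_right r ((bv - av)/2); linarith
      by_cases h : yv + m ≤ bv
      · refine ⟨yv, fun t ht => ?_⟩
        obtain ⟨h1, h2⟩ := ht
        refine ⟨by exact_mod_cast (by linarith : av < t),
          by exact_mod_cast (by linarith : t < bv), ?_⟩
        rw [abs_lt]; constructor <;> linarith
      · push_neg at h
        refine ⟨yv - m, fun t ht => ?_⟩
        obtain ⟨h1, h2⟩ := ht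
        refine ⟨by exact_mod_cast (by linarith : av < t),
          by exact_mod_cast (by linarith : t < bv), ?_⟩
        rw [abs_lt]; constructor <;> linarith

lemma box_volume (d : ℕ) (u m : Fin d → ℝ) :
    volume {w : EuclideanSpace ℝ (Fin d) | ∀ i, w i ∈ Ioo (u i) (u i + m i)} =
      ∏ i, ENNReal.ofReal (m i) := by
  have h : {w : EuclideanSpace ℝ (Fin d) | ∀ i, w i ∈ Ioo (u i) (u i + m i)} =
      (WithLp.ofLp : EuclideanSpace ℝ (Fin d) → (Fin d → ℝ)) ⁻¹' (univ.pi fun i => Ioo (u i) (u i + m i)) := by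
    ext w; simp [Set.mem_pi]
  rw [h, (PiLp.volume_preserving_ofLp (Fin d)).measure_preimage
    (MeasurableSet.univ_pi fun i => measurableSet_Ioo).nullMeasurableSet]
  rw [volume_pi_pi]
  simp

lemma dist_le_of_coord (d : ℕ) (x y : EuclideanSpace ℝ (Fin d)) (t : ℝ) (ht : 0 ≤ t)
    (h : ∀ i, |x i - y i| < t) : dist x y ≤ Real.sqrt d * t := by
  rw [EuclideanSpace.dist_eq]
  have hsum : ∑ i, dist (x i) (y i)^2 ≤ ∑ _i : Fin d, t^2 := by
    apply Finset.sum_le_sum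
    intro i _
    have := (h i).le
    rw [Real.dist_eq]
    nlinarith [abs_nonneg (x i - y i)]
  calc Real.sqrt (∑ i, dist (x i) (y i)^2) ≤ Real.sqrt (d * t^2) := by
        apply Real.sqrt_le_sqrt; simpa using hsum
    _ = Real.sqrt d * t := by
        rw [Real.sqrt_mul (by positivity), Real.sqrt_sq ht]

lemma coord_between (aE bE : EReal) (zv xv wv t : ℝ) (ht0 : 0 ≤ t) (ht1 : t ≤ 1)
    (hw : wv = zv + t * (xv - zv)) (hz1 : aE < (zv : EReal)) (hz2 : (zv : EReal) < bE)
    (hx1 : aE < (xv : EReal)) (hx2 : (xv : EReal) < bE) :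
    aE < (wv : EReal) ∧ (wv : EReal) < bE := by
  constructor
  · induction aE with
    | bot => exact bot_lt_iff_ne_bot.2 (EReal.coe_ne_bot _)
    | top => exact absurd hz1 (by simp)
    | coe av =>
      have h1 : av < zv := by exact_mod_cast hz1
      have h2 : av < xv := by exact_mod_cast hx1
      have : av < wv := by rcases le_total zv xv with h | h <;> nlinarith
      exact_mod_cast this
  · induction bE with
    | top => exact EReal.coe_lt_top _
    | bot => exact absurd hz2 (by simp)
    | coe bv =>
      have h1 : zv < bv := by exact_mod_cast hz2
      have h2 : xv < bv := by exact_mod_cast hx2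
      have : wv < bv := by rcases le_total zv xv with h | h <;> nlinarith
      exact_mod_cast this

lemma between_aux (av z x w t : ℝ) (ht0 : 0 ≤ t) (ht1 : t ≤ 1)
    (hw : w = z + t * (x - z)) (hz : av < z) (hx : av < x) : av < w := by
  rcases le_total z x with h | h <;> nlinarith

lemma between_aux' (bv z x w t : ℝ) (ht0 : 0 ≤ t) (ht1 : t ≤ 1)
    (hw : w = z + t * (x - z)) (hz : z < bv) (hx : x < bv) : w < bv := by
  rcases le_total z x with h | h <;> nlinarith

end Aux

set_option maxHeartbeats 1600000 in
/-- Lemma 16 (Plower): if P(x,dy) ≥ ε Leb(dy) whenever x,y ∈ J with |y−x| < δ, where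
J ⊆ 𝒳 is a (possibly unbounded) rectangle, then for each n there is β_n > 0 with
Pⁿ(x,dy) ≥ β_n Leb(dy) whenever x,y ∈ J with |y−x| < δ(n+1)/2. -/
theorem iterate_minorization_on_rectangle
    (d : ℕ) (𝒳 : Set (EuclideanSpace ℝ (Fin d))) (hopen : IsOpen 𝒳)
    (P : Kernel (EuclideanSpace ℝ (Fin d)) (EuclideanSpace ℝ (Fin d))) [IsMarkovKernel P]
    -- the rectangle J, with extended-real endpoints
    (a b : Fin d → EReal) (hab : ∀ i, a i < b i)
    (J : Set (EuclideanSpace ℝ (Fin d)))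
    (hJ : J = {x | ∀ i, a i < (x i : EReal) ∧ (x i : EReal) < b i})
    (hJX : J ⊆ 𝒳)
    (δ ε : ℝ) (hδ : 0 < δ) (hε : 0 < ε)
    (hmin : ∀ x ∈ J, ∀ A : Set (EuclideanSpace ℝ (Fin d)), MeasurableSet A →
        A ⊆ J ∩ ball x δ → ENNReal.ofReal ε * volume A ≤ P x A) :
    ∀ n : ℕ, 1 ≤ n → ∃ β : ℝ, 0 < β ∧
      ∀ x ∈ J, ∀ A : Set (EuclideanSpace ℝ (Fin d)), MeasurableSet A →
        A ⊆ J ∩ ball x (δ * (n + 1) / 2) →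
        ENNReal.ofReal β * volume A ≤ iterK P n x A := by
  intro n hn
  induction n, hn using Nat.le_induction with
  | base =>
    refine ⟨ε, hε, fun x hx A hA hsub => ?_⟩
    rw [iterK_one_apply]
    apply hmin x hx A hA
    have : δ * ((1 : ℕ) + 1) / 2 = δ := by push_cast; ring
    rwa [this] at hsub
  | succ n hn ih =>
    obtain ⟨β, hβ, hβprop⟩ := ih
    -- grid side length
    set s : ℝ := δ / (8 * (Real.sqrt d + 1)) with hs_def
    have hsqrt : (0:ℝ) ≤ Real.sqrt d := Real.sqrt_nonneg _
    have hs : 0 < s := by positivity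
    have hds : Real.sqrt d * s < δ / 8 := by
      have h1 : (Real.sqrt d + 1) * s = δ / 8 := by
        rw [hs_def, mul_div_assoc', div_eq_div_iff (by positivity) (by norm_num)]; ring
      nlinarith
    -- per-coordinate interval data
    choose m hm0 hu using fun i => interval_aux (a i) (b i) (hab i) s hs
    set βnew : ℝ := ε * β * ∏ i, m i with hβnew_def
    have hprod_pos : 0 < ∏ i, m i := Finset.prod_pos (fun i _ => hm0 i)
    refine ⟨βnew, by positivity, fun x hx A hA hsub => ?_⟩
    -- grid cubes
    set C : (Fin d → ℤ) → Set (EuclideanSpace ℝ (Fin d)) :=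
      fun k => {w | ∀ i, w i ∈ Ico ((k i : ℝ) * s) ((k i : ℝ) * s + s)} with hC_def
    have hCmeas : ∀ k, MeasurableSet (C k) := by
      intro k
      have : C k = ⋂ i, (fun w : EuclideanSpace ℝ (Fin d) => w i) ⁻¹'
          (Ico ((k i : ℝ) * s) ((k i : ℝ) * s + s)) := by
        ext w; simp [hC_def, Set.mem_iInter]
      rw [this]
      exact MeasurableSet.iInter fun i =>
        ((measurable_pi_apply i).comp (WithLp.measurable_ofLp 2 _)) measurableSet_Ico
    have hCdisj : Pairwise (Function.onFun Disjoint (fun k => A ∩ C k)) := by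
      intro k k' hkk'
      refine Set.disjoint_left.2 fun w hw hw' => hkk' ?_
      funext i
      by_contra hne
      obtain ⟨h1, h2⟩ := hw.2 i
      obtain ⟨h1', h2'⟩ := hw'.2 i
      rcases lt_or_gt_of_ne hne with h | h
      · have : (k i : ℝ) + 1 ≤ (k' i : ℝ) := by exact_mod_cast h
        nlinarith
      · have : (k' i : ℝ) + 1 ≤ (k i : ℝ) := by exact_mod_cast h
        nlinarith
    have hCcover : A = ⋃ k, A ∩ C k := by
      ext w
      simp only [Set.mem_iUnion, Set.mem_inter_iff]
      constructor
      · intro hw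
        refine ⟨fun i => ⌊w i / s⌋, hw, fun i => ?_⟩
        constructor
        · have := Int.floor_le (w i / s)
          calc (⌊w i / s⌋ : ℝ) * s ≤ (w i / s) * s := by nlinarith
            _ = w i := by field_simp
        · have := Int.lt_floor_add_one (w i / s)
          calc w i = (w i / s) * s := by field_simp
            _ < ((⌊w i / s⌋ : ℝ) + 1) * s := by nlinarith
            _ = (⌊w i / s⌋ : ℝ) * s + s := by ring
      · rintro ⟨k, hw, _⟩; exact hw
    -- reduce to pieces
    have hkey : ∀ k : Fin d → ℤ, ENNReal.ofReal βnew * volume (A ∩ C k) ≤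
        iterK P (n + 1) x (A ∩ C k) := by
      intro k
      rcases Set.eq_empty_or_nonempty (A ∩ C k) with hAk | ⟨z, hz⟩
      · simp [hAk]
      set A' := A ∩ C k with hA'_def
      have hA'meas : MeasurableSet A' := hA.inter (hCmeas k)
      have hA'A : A' ⊆ A := Set.inter_subset_left
      have hzJ : z ∈ J := (hsub (hA'A hz)).1
      have hzball : dist z x < δ * (n + 1 + 1) / 2 := by
        have := (hsub (hA'A hz)).2
        rwa [mem_ball, Nat.cast_add, Nat.cast_one] at this
      -- diameter of the piece
      have hdiam : ∀ v ∈ A', dist v z < δ / 8 := by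
        intro v hv
        refine lt_of_le_of_lt (dist_le_of_coord d v z s hs.le fun i => ?_) hds
        obtain ⟨hv1, hv2⟩ := hv.2 i
        obtain ⟨hz1, hz2⟩ := hz.2 i
        rw [abs_lt]; constructor <;> linarith
      -- the intermediate point y
      set D : ℝ := dist z x with hD_def
      have hD0 : 0 ≤ D := dist_nonneg
      set t : ℝ := min 1 (5 * δ / 8 / D) with ht_def
      have ht0 : 0 ≤ t := le_min zero_le_one (by positivity)
      have ht1 : t ≤ 1 := min_le_left _ _
      set y : EuclideanSpace ℝ (Fin d) := z + t • (x - z) with hy_def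
      have hyz_eq : dist y z = t * D := by
        rw [dist_eq_norm]
        have : y - z = t • (x - z) := by rw [hy_def]; exact add_sub_cancel_left z _
        rw [this, norm_smul, Real.norm_eq_abs, abs_of_nonneg ht0, hD_def, dist_eq_norm,
          norm_sub_rev]
      have hyx_eq : dist y x = (1 - t) * D := by
        rw [dist_eq_norm]
        have : y - x = (1 - t) • (z - x) := by rw [hy_def]; module
        rw [this, norm_smul, Real.norm_eq_abs, abs_of_nonneg (by linarith), hD_def,
          dist_eq_norm]
      have hyz : dist y z ≤ 5 * δ / 8 := by
        rw [hyz_eq]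
        rcases eq_or_lt_of_le hD0 with hD | hD
        · rw [← hD, mul_zero]; positivity
        · have : t ≤ 5 * δ / 8 / D := min_le_right _ _
          calc t * D ≤ (5 * δ / 8 / D) * D := by nlinarith
            _ = 5 * δ / 8 := by field_simp
      have hyx : dist y x < δ * (n + 1) / 2 - δ / 8 := by
        have hn1 : (1:ℝ) ≤ n := by exact_mod_cast hn
        rw [hyx_eq]
        rcases le_or_gt (5 * δ / 8 / D) 1 with h | h
        · have htval : t = 5 * δ / 8 / D := min_eq_right h
          rcases eq_or_lt_of_le hD0 with hD | hD
          · rw [← hD, mul_zero]; nlinarith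
          · have heq : (1 - t) * D = D - 5 * δ / 8 := by
              rw [htval]; field_simp
            rw [heq]; linarith
        · have htval : t = 1 := min_eq_left h.le
          rw [htval]; rw [sub_self, zero_mul]; nlinarith
      -- y ∈ J (coordinatewise)
      have hy_coord : ∀ i, y i = z i + t * (x i - z i) := by
        intro i
        rw [hy_def]
        simp [PiLp.add_apply, PiLp.smul_apply, PiLp.sub_apply]
      have hyJ : ∀ i, a i < (y i : EReal) ∧ (y i : EReal) < b i := by
        intro i
        have hzi := (hJ ▸ hzJ) i
        have hxi := (hJ ▸ hx) i
        exact coord_between (a i) (b i) (z i) (x i) (y i) t ht0 ht1 (hy_coord i)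
          hzi.1 hzi.2 hxi.1 hxi.2
      -- the box B around y
      choose u huB using fun i => hu i (y i) (hyJ i).1 (hyJ i).2
      set B : Set (EuclideanSpace ℝ (Fin d)) :=
        {w | ∀ i, w i ∈ Ioo (u i) (u i + m i)} with hB_def
      have hBmeas : MeasurableSet B := by
        have : B = ⋂ i, (fun w : EuclideanSpace ℝ (Fin d) => w i) ⁻¹'
            (Ioo (u i) (u i + m i)) := by
          ext w; simp [hB_def, Set.mem_iInter]
        rw [this]
        exact MeasurableSet.iInter fun i =>
          ((measurable_pi_apply i).comp (WithLp.measurable_ofLp 2 _)) measurableSet_Ioo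
      have hBvol : volume B = ∏ i, ENNReal.ofReal (m i) := box_volume d u m
      have hBprop : ∀ w ∈ B, (∀ i, a i < (w i : EReal) ∧ (w i : EReal) < b i) ∧
          ∀ i, |w i - y i| < s := by
        intro w hw
        constructor
        · intro i; exact ⟨(huB i (hw i)).1, (huB i (hw i)).2.1⟩
        · intro i; exact (huB i (hw i)).2.2
      have hBJ : ∀ w ∈ B, w ∈ J := by
        intro w hw; rw [hJ]; exact (hBprop w hw).1
      have hBy : ∀ w ∈ B, dist w y < δ / 8 :=
        fun w hw => lt_of_le_of_lt
          (dist_le_of_coord d w y s hs.le (hBprop w hw).2) hds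
      have hBball : B ⊆ J ∩ ball x (δ * (n + 1) / 2) := by
        intro w hw
        refine ⟨hBJ w hw, mem_ball.2 ?_⟩
        calc dist w x ≤ dist w y + dist y x := dist_triangle _ _ _
          _ < δ / 8 + (δ * (n + 1) / 2 - δ / 8) := by
              exact add_lt_add (hBy w hw) hyx
          _ = δ * (n + 1) / 2 := by ring
      -- P w A' ≥ ε vol A' for w ∈ B
      have hPbound : ∀ w ∈ B, ENNReal.ofReal ε * volume A' ≤ P w A' := by
        intro w hw
        apply hmin w (hBJ w hw) A' hA'meas
        intro v hv
        refine ⟨(hsub (hA'A hv)).1, mem_ball.2 ?_⟩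
        calc dist v w ≤ dist v z + dist z y + dist y w := dist_triangle4 _ _ _ _
          _ < δ / 8 + 5 * δ / 8 + δ / 8 := by
              have h1 := hdiam v hv
              have h2 : dist z y ≤ 5 * δ / 8 := by rwa [dist_comm]
              have h3 : dist y w < δ / 8 := by
                rw [dist_comm]; exact hBy w hw
              linarith
          _ < δ := by linarith
      -- put it together
      have hBn : ENNReal.ofReal β * volume B ≤ iterK P n x B :=
        hβprop x hx B hBmeas hBball
      calc ENNReal.ofReal βnew * volume A'
          = ENNReal.ofReal ε * volume A' * (ENNReal.ofReal β * volume B) := by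
            rw [hBvol, hβnew_def, ENNReal.ofReal_mul (by positivity),
              ENNReal.ofReal_mul hε.le,
              ← ENNReal.ofReal_prod_of_nonneg (fun i _ => (hm0 i).le)]
            ring
        _ ≤ ENNReal.ofReal ε * volume A' * iterK P n x B := by
            gcongr
        _ = ∫⁻ w in B, ENNReal.ofReal ε * volume A' ∂(iterK P n x) := by
            rw [setLIntegral_const]
        _ ≤ ∫⁻ w in B, P w A' ∂(iterK P n x) := by
            apply setLIntegral_mono (Kernel.measurable_coe P hA'meas)
            exact fun w hw => hPbound w hw
        _ ≤ ∫⁻ w, P w A' ∂(iterK P n x) := setLIntegral_le_lintegral _ _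
        _ = iterK P (n + 1) x A' := (iterK_succ_apply' P n x A' hA'meas).symm
    -- sum over pieces
    have hvol : volume A = ∑' k : Fin d → ℤ, volume (A ∩ C k) := by
      conv_lhs => rw [hCcover]
      exact measure_iUnion hCdisj fun k => hA.inter (hCmeas k)
    have hiter : iterK P (n + 1) x A = ∑' k : Fin d → ℤ, iterK P (n + 1) x (A ∩ C k) := by
      conv_lhs => rw [hCcover]
      exact measure_iUnion hCdisj fun k => hA.inter (hCmeas k)
    rw [hvol, hiter, ← ENNReal.tsum_mul_left]
    exact ENNReal.tsum_le_tsum hkey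
end

section
/- Let P be a Markov transition kernel on a measurable space (𝒳, ℱ) that is reversible with respect to a probability measure π, and let C ∈ ℱ with π(C) > 0. Assume C is a small set for P: there are n₀ ∈ ℕ, β > 0 and a probability measure ν such that P^{n₀}(x, A) ≥ β·1_C(x)·ν(A) for all x ∈ 𝒳 and A ∈ ℱ. Then P^{2n₀}(x, A) ≥ (1/4) β² · 1_C(x) · π(A ∩ C) for all x ∈ 𝒳 and A ∈ ℱ. In particular, C is a (2n₀)-small set with minorizing measure π restricted and normalized to C. -/
open MeasureTheory ProbabilityTheory Filter Metric Set
open scoped ENNReal Topology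

section Aux
variable {𝒳 : Type*} [MeasurableSpace 𝒳]

lemma iterK_zero (P : Kernel 𝒳 𝒳) : iterK P 0 = Kernel.id := rfl
lemma iterK_succ (P : Kernel 𝒳 𝒳) (n : ℕ) : iterK P (n + 1) = P ∘ₖ iterK P n := rfl

instance iterK_markov (P : Kernel 𝒳 𝒳) [IsMarkovKernel P] (n : ℕ) :
    IsMarkovKernel (iterK P n) := by
  induction n with
  | zero => rw [iterK_zero]; infer_instance
  | succ n ih => rw [iterK_succ]; exact Kernel.IsMarkovKernel.comp _ _

lemma iterK_add (P : Kernel 𝒳 𝒳) [IsMarkovKernel P] (m n : ℕ) :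
    iterK P (m + n) = iterK P n ∘ₖ iterK P m := by
  induction n with
  | zero => simp [iterK_zero]
  | succ n ih =>
      rw [← Nat.add_assoc, iterK_succ, iterK_succ, ih, Kernel.comp_assoc]

lemma iterK_succ' (P : Kernel 𝒳 𝒳) [IsMarkovKernel P] (n : ℕ) :
    iterK P (n + 1) = iterK P n ∘ₖ P := by
  have h := iterK_add P 1 n
  rw [Nat.add_comm 1 n] at h
  rw [h]
  congr 1
  rw [iterK_succ, iterK_zero, Kernel.comp_id]

lemma compProd_swap_eq (P : Kernel 𝒳 𝒳) [IsMarkovKernel P]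
    (π : Measure 𝒳) [IsProbabilityMeasure π]
    (hrev : ∀ A B : Set 𝒳, MeasurableSet A → MeasurableSet B →
        ∫⁻ x in A, P x B ∂π = ∫⁻ x in B, P x A ∂π) :
    (π ⊗ₘ P).map Prod.swap = π ⊗ₘ P := by
  refine ext_of_generate_finite _ generateFrom_prod.symm isPiSystem_prod ?_ ?_
  · rintro s ⟨A, hA, B, hB, rfl⟩
    simp only [mem_setOf_eq] at hA hB
    rw [Measure.map_apply measurable_swap (hA.prod hB)]
    have : Prod.swap ⁻¹' (A ×ˢ B) = B ×ˢ A := by ext p; simp [and_comm]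
    rw [this, Measure.compProd_apply_prod hB hA, Measure.compProd_apply_prod hA hB,
      hrev A B hA hB]
  · rw [Measure.map_apply measurable_swap MeasurableSet.univ]
    simp

lemma selfadj (P : Kernel 𝒳 𝒳) [IsMarkovKernel P]
    (π : Measure 𝒳) [IsProbabilityMeasure π]
    (hrev : ∀ A B : Set 𝒳, MeasurableSet A → MeasurableSet B →
        ∫⁻ x in A, P x B ∂π = ∫⁻ x in B, P x A ∂π)
    {f g : 𝒳 → ℝ≥0∞} (hf : Measurable f) (hg : Measurable g) :
    ∫⁻ x, f x * ∫⁻ y, g y ∂(P x) ∂π = ∫⁻ x, (∫⁻ y, f y ∂(P x)) * g x ∂π := by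
  have hfg : Measurable fun p : 𝒳 × 𝒳 => f p.1 * g p.2 :=
    (hf.comp measurable_fst).mul (hg.comp measurable_snd)
  have h1 : ∫⁻ x, f x * ∫⁻ y, g y ∂(P x) ∂π
      = ∫⁻ p : 𝒳 × 𝒳, f p.1 * g p.2 ∂(π ⊗ₘ P) := by
    rw [Measure.lintegral_compProd hfg]
    simp_rw [lintegral_const_mul _ hg]
  have h2 : ∫⁻ p : 𝒳 × 𝒳, f p.1 * g p.2 ∂(π ⊗ₘ P)
      = ∫⁻ p : 𝒳 × 𝒳, f p.2 * g p.1 ∂(π ⊗ₘ P) := by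
    conv_lhs => rw [← compProd_swap_eq P π hrev]
    rw [lintegral_map hfg measurable_swap]
    rfl
  have hgf : Measurable fun p : 𝒳 × 𝒳 => f p.2 * g p.1 :=
    (hf.comp measurable_snd).mul (hg.comp measurable_fst)
  rw [h1, h2, Measure.lintegral_compProd hgf]
  congr 1
  ext x
  rw [← lintegral_mul_const _ hf]

lemma selfadj_iter (P : Kernel 𝒳 𝒳) [IsMarkovKernel P]
    (π : Measure 𝒳) [IsProbabilityMeasure π]
    (hrev : ∀ A B : Set 𝒳, MeasurableSet A → MeasurableSet B →
        ∫⁻ x in A, P x B ∂π = ∫⁻ x in B, P x A ∂π) (n : ℕ) :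
    ∀ {f g : 𝒳 → ℝ≥0∞}, Measurable f → Measurable g →
      ∫⁻ x, f x * ∫⁻ y, g y ∂(iterK P n x) ∂π
        = ∫⁻ x, (∫⁻ y, f y ∂(iterK P n x)) * g x ∂π := by
  induction n with
  | zero =>
      intro f g hf hg
      simp only [iterK_zero, Kernel.id, Kernel.deterministic_apply, id_eq]
      simp_rw [lintegral_dirac' _ hg, lintegral_dirac' _ hf]
  | succ n ih =>
      intro f g hf hg
      have hPg : Measurable fun z => ∫⁻ y, g y ∂(P z) := hg.lintegral_kernel
      have hQf : Measurable fun z => ∫⁻ y, f y ∂(iterK P n z) := hf.lintegral_kernel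
      calc ∫⁻ x, f x * ∫⁻ y, g y ∂(iterK P (n + 1) x) ∂π
          = ∫⁻ x, f x * ∫⁻ z, (∫⁻ y, g y ∂(P z)) ∂(iterK P n x) ∂π := by
            simp_rw [iterK_succ, Kernel.lintegral_comp P (iterK P n) _ hg]
        _ = ∫⁻ x, (∫⁻ y, f y ∂(iterK P n x)) * (∫⁻ y, g y ∂(P x)) ∂π := ih hf hPg
        _ = ∫⁻ x, (∫⁻ z, (∫⁻ y, f y ∂(iterK P n z)) ∂(P x)) * g x ∂π :=
            selfadj P π hrev hQf hg
        _ = ∫⁻ x, (∫⁻ y, f y ∂(iterK P (n + 1) x)) * g x ∂π := by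
            rw [iterK_succ']
            simp_rw [Kernel.lintegral_comp (iterK P n) P _ hf]

lemma rev_iter (P : Kernel 𝒳 𝒳) [IsMarkovKernel P]
    (π : Measure 𝒳) [IsProbabilityMeasure π]
    (hrev : ∀ A B : Set 𝒳, MeasurableSet A → MeasurableSet B →
        ∫⁻ x in A, P x B ∂π = ∫⁻ x in B, P x A ∂π) (n : ℕ)
    {A B : Set 𝒳} (hA : MeasurableSet A) (hB : MeasurableSet B) :
    ∫⁻ x in A, iterK P n x B ∂π = ∫⁻ x in B, iterK P n x A ∂π := by
  have h := selfadj_iter P π hrev n (f := A.indicator fun _ => (1 : ℝ≥0∞))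
    (g := B.indicator fun _ => (1 : ℝ≥0∞))
    (measurable_one.indicator hA) (measurable_one.indicator hB)
  simp_rw [lintegral_indicator hA, lintegral_indicator hB, setLIntegral_one] at h
  have e1 : ∫⁻ x in A, iterK P n x B ∂π
      = ∫⁻ x, A.indicator (fun _ => (1 : ℝ≥0∞)) x * iterK P n x B ∂π := by
    rw [← lintegral_indicator hA]
    refine lintegral_congr fun x => ?_
    by_cases hx : x ∈ A <;> simp [hx]
  have e2 : ∫⁻ x in B, iterK P n x A ∂π
      = ∫⁻ x, iterK P n x A * B.indicator (fun _ => (1 : ℝ≥0∞)) x ∂π := by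
    rw [← lintegral_indicator hB]
    refine lintegral_congr fun x => ?_
    by_cases hx : x ∈ B <;> simp [hx]
  rw [e1, e2, h]
end Aux


/-- Lemma 23 (BM_lemma, reversible case): if P is reversible with respect to π and C is a
small set via P^{n₀}(x,·) ≥ β 1_C(x) ν(·), then
P^{2n₀}(x,A) ≥ (1/4) β² 1_C(x) π(A ∩ C); in particular C is a (2n₀)-small set with
minorizing measure π restricted and normalized to C. -/
theorem reversible_small_set_pi_minorization
    {𝒳 : Type*} [MeasurableSpace 𝒳]
    (P : Kernel 𝒳 𝒳) [IsMarkovKernel P] (π : Measure 𝒳) [IsProbabilityMeasure π]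
    -- P is reversible with respect to π
    (hrev : ∀ A B : Set 𝒳, MeasurableSet A → MeasurableSet B →
        ∫⁻ x in A, P x B ∂π = ∫⁻ x in B, P x A ∂π)
    (C : Set 𝒳) (hC : MeasurableSet C) (hπC : 0 < π C)
    (n₀ : ℕ) (hn₀ : 1 ≤ n₀) (β : ℝ≥0∞) (hβ : 0 < β)
    (ν : Measure 𝒳) [IsProbabilityMeasure ν]
    (hsmall : ∀ (x : 𝒳) (A : Set 𝒳), MeasurableSet A →
        β * C.indicator (fun _ => (1 : ℝ≥0∞)) x * ν A ≤ iterK P n₀ x A) :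
    (∀ (x : 𝒳) (A : Set 𝒳), MeasurableSet A →
        β ^ 2 / 4 * C.indicator (fun _ => (1 : ℝ≥0∞)) x * π (A ∩ C) ≤
          iterK P (2 * n₀) x A) ∧
      ∃ β' : ℝ≥0∞, 0 < β' ∧ ∀ x ∈ C, ∀ A : Set 𝒳, MeasurableSet A →
        β' * ((π C)⁻¹ * π (A ∩ C)) ≤ iterK P (2 * n₀) x A := by
  classical
  have hsm : ∀ x ∈ C, ∀ A : Set 𝒳, MeasurableSet A → β * ν A ≤ iterK P n₀ x A := by
    intro x hx A hA
    simpa [Set.indicator_of_mem hx] using hsmall x A hA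
  obtain ⟨x₀, hx₀⟩ : C.Nonempty := nonempty_of_measure_ne_zero hπC.ne'
  have hβ1 : β ≤ 1 := by
    simpa [measure_univ] using hsm x₀ hx₀ univ MeasurableSet.univ
  have hβtop : β ≠ ⊤ := (lt_of_le_of_lt hβ1 ENNReal.one_lt_top).ne
  have key : ∀ x ∈ C, ∀ A : Set 𝒳, MeasurableSet A →
      β ^ 2 / 4 * π (A ∩ C) ≤ iterK P (2 * n₀) x A := by
    intro x hx A hA
    set A' := A ∩ C with hA'def
    have hA' : MeasurableSet A' := hA.inter hC
    by_cases hA'0 : π A' = 0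
    · simp [hA'0]
    set E := {y : 𝒳 | β / 2 * π A' ≤ iterK P n₀ y A'} with hEdef
    have hE : MeasurableSet E :=
      measurableSet_le measurable_const ((iterK P n₀).measurable_coe hA')
    have hνEc : ν Eᶜ ≤ 1 / 2 := by
      have h1 : β * ν Eᶜ * π A' ≤ ∫⁻ z in A', iterK P n₀ z Eᶜ ∂π := by
        calc β * ν Eᶜ * π A' = ∫⁻ _ in A', β * ν Eᶜ ∂π := by rw [setLIntegral_const]
          _ ≤ ∫⁻ z in A', iterK P n₀ z Eᶜ ∂π :=
            setLIntegral_mono' hA' fun z hz => hsm z hz.2 Eᶜ hE.compl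
      have h2 : ∫⁻ z in A', iterK P n₀ z Eᶜ ∂π = ∫⁻ y in Eᶜ, iterK P n₀ y A' ∂π :=
        rev_iter P π hrev n₀ hA' hE.compl
      have h3 : ∫⁻ y in Eᶜ, iterK P n₀ y A' ∂π ≤ β / 2 * π A' := by
        calc ∫⁻ y in Eᶜ, iterK P n₀ y A' ∂π ≤ ∫⁻ _ in Eᶜ, β / 2 * π A' ∂π :=
            setLIntegral_mono' hE.compl fun y hy => (not_le.mp fun h => hy h).le
          _ = β / 2 * π A' * π Eᶜ := setLIntegral_const _ _
          _ ≤ β / 2 * π A' * 1 := by gcongr; exact prob_le_one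
          _ = β / 2 * π A' := mul_one _
      have h4 : β * ν Eᶜ * π A' ≤ β * (1 / 2) * π A' := by
        have : β / 2 = β * (1 / 2) := by
          rw [div_eq_mul_inv, one_div]
        calc β * ν Eᶜ * π A' ≤ β / 2 * π A' := h1.trans (h2 ▸ h3)
          _ = β * (1 / 2) * π A' := by rw [this]
      have h5 : β * ν Eᶜ ≤ β * (1 / 2) :=
        (ENNReal.mul_le_mul_iff_left hA'0 (measure_ne_top π A')).mp h4
      exact (ENNReal.mul_le_mul_iff_right hβ.ne' hβtop).mp h5
    have hνE : 1 / 2 ≤ ν E := by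
      have hsum : ν E + ν Eᶜ = 1 := by
        rw [measure_add_measure_compl hE, measure_univ]
      have h6 : 1 / 2 + 1 / 2 ≤ ν E + 1 / 2 := by
        rw [ENNReal.add_halves]
        calc (1 : ℝ≥0∞) = ν E + ν Eᶜ := hsum.symm
          _ ≤ ν E + 1 / 2 := by gcongr
      exact (ENNReal.add_le_add_iff_right (by norm_num)).mp h6
    have hm : β / 2 * π A' * (1 / 2) ≤ ∫⁻ y, iterK P n₀ y A' ∂ν := by
      calc β / 2 * π A' * (1 / 2) ≤ β / 2 * π A' * ν E := by gcongr
        _ = ∫⁻ _ in E, β / 2 * π A' ∂ν := (setLIntegral_const _ _).symm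
        _ ≤ ∫⁻ y in E, iterK P n₀ y A' ∂ν := setLIntegral_mono' hE fun y hy => hy
        _ ≤ ∫⁻ y, iterK P n₀ y A' ∂ν := setLIntegral_le_lintegral _ _
    have hcomp : iterK P (2 * n₀) x A = ∫⁻ y, iterK P n₀ y A ∂(iterK P n₀ x) := by
      rw [two_mul, iterK_add, Kernel.comp_apply' _ _ _ hA]
    have hsmul : β * ∫⁻ y, iterK P n₀ y A' ∂ν ≤ ∫⁻ y, iterK P n₀ y A' ∂(iterK P n₀ x) := by
      have hle : (β • ν) ≤ iterK P n₀ x := by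
        refine Measure.le_iff.mpr fun s hs => ?_
        simpa [smul_eq_mul] using hsm x hx s hs
      calc β * ∫⁻ y, iterK P n₀ y A' ∂ν = ∫⁻ y, iterK P n₀ y A' ∂(β • ν) :=
          by rw [lintegral_smul_measure, smul_eq_mul]
        _ ≤ ∫⁻ y, iterK P n₀ y A' ∂(iterK P n₀ x) := lintegral_mono' hle le_rfl
    have harith : β ^ 2 / 4 * π A' = β * (β / 2 * π A' * (1 / 2)) := by
      have h4 : (4 : ℝ≥0∞)⁻¹ = 2⁻¹ * 2⁻¹ := by
        rw [show (4 : ℝ≥0∞) = 2 * 2 by norm_num,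
          ENNReal.mul_inv (Or.inl two_ne_zero) (Or.inl ENNReal.ofNat_ne_top)]
      rw [pow_two, div_eq_mul_inv, div_eq_mul_inv, one_div, h4]
      ring
    calc β ^ 2 / 4 * π A' = β * (β / 2 * π A' * (1 / 2)) := harith
      _ ≤ β * ∫⁻ y, iterK P n₀ y A' ∂ν := by gcongr
      _ ≤ ∫⁻ y, iterK P n₀ y A' ∂(iterK P n₀ x) := hsmul
      _ ≤ ∫⁻ y, iterK P n₀ y A ∂(iterK P n₀ x) :=
        lintegral_mono fun y => measure_mono inter_subset_left
      _ = iterK P (2 * n₀) x A := hcomp.symm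
  constructor
  · intro x A hA
    by_cases hx : x ∈ C
    · simpa [Set.indicator_of_mem hx] using key x hx A hA
    · simp [Set.indicator_of_notMem hx]
  · refine ⟨β ^ 2 / 4 * π C, ?_, ?_⟩
    · exact ENNReal.mul_pos (ENNReal.div_pos (pow_ne_zero 2 hβ.ne') (by norm_num)).ne' hπC.ne'
    · intro x hx A hA
      have e : β ^ 2 / 4 * π C * ((π C)⁻¹ * π (A ∩ C)) = β ^ 2 / 4 * π (A ∩ C) := by
        calc β ^ 2 / 4 * π C * ((π C)⁻¹ * π (A ∩ C))
            = β ^ 2 / 4 * (π C * (π C)⁻¹) * π (A ∩ C) := by ring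
          _ = β ^ 2 / 4 * π (A ∩ C) := by
            rw [ENNReal.mul_inv_cancel hπC.ne' (measure_ne_top π C), mul_one]
      rw [e]
      exact key x hx A hA
end
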